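/- arXiv:2401.00382 — 3 statements merged into one kernel-verified Lean document; each statement's English description precedes it below -/
import Mathlib

section
/- Let X be a commutative topological algebra over K (K = ℝ or ℂ), M a subset of X, and α a cardinal with α ≥ ℵ₀ and α ≥ w(X). Then M is α-infinitely strongly α-dense-algebrable if, and only if, M is strongly α-dense-algebrable. -/
universe u

open Cardinal

/-- The weight of a topological space: the smallest cardinality of a basis for its topology. -/
noncomputable def tsWeight (X : Type u) [TopologicalSpace X] : Cardinal.{u} :=
  sInf { c : Cardinal.{u} | ∃ B : Set (Set X),
    TopologicalSpace.IsTopologicalBasis B ∧ #↥B = c }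

variable (𝕜 : Type) [RCLike 𝕜] {X : Type} [NonUnitalCommRing X] [Module 𝕜 X]
  [SMulCommClass 𝕜 X X] [IsScalarTower 𝕜 X X]

/-- `S` is a set of free generators (SFG): for every `n`, every nonzero polynomial `P` in `n`
variables with no constant term and all pairwise distinct `x₁, …, x_n ∈ S` one has
`P(x₁, …, x_n) ≠ 0`.  (The evaluation of a polynomial with no constant term at elements of the
non-unital algebra `X` is performed inside the unitization of `X`, where it lands in the copy
of `X`.) -/
def IsSFG (S : Set X) : Prop :=
  ∀ (n : ℕ) (x : Fin n → X), (∀ i, x i ∈ S) → Function.Injective x →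
    ∀ P : MvPolynomial (Fin n) 𝕜, P ≠ 0 → MvPolynomial.constantCoeff P = 0 →
      MvPolynomial.aeval (fun i => (x i : Unitization 𝕜 X)) P ≠ 0

/-- `M` is strongly `α`-dense-algebrable: there is a set of free generators `F` with `|F| = α`,
`⟨F⟩` dense in `X` and `⟨F⟩ ⊆ M ∪ {0}`. -/
def StronglyDenseAlgebrable [TopologicalSpace X] (M : Set X) (α : Cardinal) : Prop :=
  ∃ F : Set X, IsSFG 𝕜 F ∧ #↥F = α ∧
    Dense ((NonUnitalAlgebra.adjoin 𝕜 F : NonUnitalSubalgebra 𝕜 X) : Set X) ∧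
    ((NonUnitalAlgebra.adjoin 𝕜 F : NonUnitalSubalgebra 𝕜 X) : Set X) ⊆ M ∪ {0}

/-- `M` is `α`-infinitely strongly `β`-dense-algebrable: there is a family `{Y_κ}_{κ<α}` of
dense `β`-generated free subalgebras of `X` contained in `M ∪ {0}` with pairwise trivial
intersections. -/
def InfStronglyDenseAlgebrable [TopologicalSpace X] (M : Set X) (α β : Cardinal) : Prop :=
  ∃ (ι : Type) (F : ι → Set X), #ι = α ∧
    (∀ i, IsSFG 𝕜 (F i) ∧ #↥(F i) = β ∧
      Dense ((NonUnitalAlgebra.adjoin 𝕜 (F i) : NonUnitalSubalgebra 𝕜 X) : Set X) ∧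
      ((NonUnitalAlgebra.adjoin 𝕜 (F i) : NonUnitalSubalgebra 𝕜 X) : Set X) ⊆ M ∪ {0}) ∧
    ∀ i j, i ≠ j →
      NonUnitalAlgebra.adjoin 𝕜 (F i) ⊓ NonUnitalAlgebra.adjoin 𝕜 (F j) =
        (⊥ : NonUnitalSubalgebra 𝕜 X)

namespace Stmt16Aux

open MvPolynomial

/-! ### Polynomial evaluation bridge -/

/-- A family version of "set of free generators". -/
def FreeFam {T : Type} (g : T → X) : Prop :=
  ∀ Q : MvPolynomial T 𝕜, Q ≠ 0 → MvPolynomial.constantCoeff Q = 0 →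
    MvPolynomial.aeval (fun t => (g t : Unitization 𝕜 X)) Q ≠ 0

variable {𝕜}

theorem freeFam_of_isSFG {S : Set X} (h : IsSFG 𝕜 S) :
    FreeFam 𝕜 (Subtype.val : S → X) := by
  intro Q hQ hcc
  obtain ⟨n, f, hf, q, rfl⟩ := exists_fin_rename Q
  have hq : q ≠ 0 := by rintro rfl; simp at hQ
  have hqcc : constantCoeff q = 0 := by rwa [constantCoeff_rename] at hcc
  have := h n (fun i => (f i : X)) (fun i => (f i).2)
    (fun i j hij => hf (Subtype.val_injective hij)) q hq hqcc
  rwa [aeval_rename]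

theorem freeFam.injective {T : Type} {g : T → X} (h : FreeFam 𝕜 g) : Function.Injective g := by
  intro t₁ t₂ het
  by_contra hne
  have hQ : (MvPolynomial.X t₁ - MvPolynomial.X t₂ : MvPolynomial T 𝕜) ≠ 0 := by
    intro h0
    have := sub_eq_zero.mp h0
    exact hne (MvPolynomial.X_injective this)
  have hcc : constantCoeff (MvPolynomial.X t₁ - MvPolynomial.X t₂ : MvPolynomial T 𝕜) = 0 := by
    simp
  refine h _ hQ hcc ?_
  simp [het]

theorem freeFam.isSFG {T : Type} {g : T → X} (h : FreeFam 𝕜 g) :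
    IsSFG 𝕜 (Set.range g) := by
  intro n x hmem hinj P hP hcc
  choose f hfx using hmem
  have hf : Function.Injective f := fun i j hij => hinj (by rw [← hfx i, ← hfx j, hij])
  have := h (rename f P) (fun h0 => hP ((rename_injective f hf).eq_iff.mp (by simpa using h0)))
    (by rwa [constantCoeff_rename])
  rw [aeval_rename] at this
  have heq : (fun i => ((x i : X) : Unitization 𝕜 X)) =
      (fun t => ((g t : X) : Unitization 𝕜 X)) ∘ f :=
    funext fun i => by rw [Function.comp_apply, hfx i]
  rw [heq]
  exact this

/-- characterization of the non-unital adjoin via polynomials. -/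
theorem mem_adjoin_iff {T : Type} (g : T → X) (x : X) :
    x ∈ NonUnitalAlgebra.adjoin 𝕜 (Set.range g) ↔
      ∃ P : MvPolynomial T 𝕜, constantCoeff P = 0 ∧
        MvPolynomial.aeval (fun t => (g t : Unitization 𝕜 X)) P = (x : Unitization 𝕜 X) := by
  constructor
  · intro hx
    let S : NonUnitalSubalgebra 𝕜 X :=
      { carrier := {y : X | ∃ P : MvPolynomial T 𝕜, constantCoeff P = 0 ∧
          MvPolynomial.aeval (fun t => (g t : Unitization 𝕜 X)) P = (y : Unitization 𝕜 X)}
        add_mem' := by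
          rintro a b ⟨P, hP, hPa⟩ ⟨Q, hQ, hQb⟩
          exact ⟨P + Q, by simp [hP, hQ], by simp [hPa, hQb, Unitization.inr_add]⟩
        mul_mem' := by
          rintro a b ⟨P, hP, hPa⟩ ⟨Q, hQ, hQb⟩
          exact ⟨P * Q, by simp [hP, hQ], by simp [hPa, hQb, Unitization.inr_mul]⟩
        smul_mem' := by
          rintro c a ⟨P, hP, hPa⟩
          exact ⟨c • P, by simp [hP], by simp [hPa, Unitization.inr_smul]⟩
        zero_mem' := ⟨0, by simp, by simp⟩ }
    have hle : NonUnitalAlgebra.adjoin 𝕜 (Set.range g) ≤ S := by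
      apply NonUnitalAlgebra.adjoin_le
      rintro y ⟨t, rfl⟩
      exact ⟨MvPolynomial.X t, by simp, by simp⟩
    exact hle hx
  · rintro ⟨P, hcc, hev⟩
    have key : ∀ P : MvPolynomial T 𝕜, ∃ y ∈ NonUnitalAlgebra.adjoin 𝕜 (Set.range g),
        MvPolynomial.aeval (fun t => (g t : Unitization 𝕜 X)) P =
          Unitization.inl (constantCoeff P) + (y : Unitization 𝕜 X) := by
      intro P
      induction P using MvPolynomial.induction_on with
      | C a =>
        refine ⟨0, zero_mem _, ?_⟩
        simp [algebraMap_eq, Unitization.algebraMap_eq_inl]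
      | add p q hp hq =>
        obtain ⟨y, hy, hyev⟩ := hp
        obtain ⟨z, hz, hzev⟩ := hq
        refine ⟨y + z, add_mem hy hz, ?_⟩
        simp only [map_add, hyev, hzev, Unitization.inr_add, Unitization.inl_add]
        abel
      | mul_X p t hp =>
        obtain ⟨y, hy, hyev⟩ := hp
        refine ⟨constantCoeff p • g t + y * g t, add_mem
          (SMulMemClass.smul_mem _ (NonUnitalAlgebra.subset_adjoin 𝕜 ⟨t, rfl⟩))
          (mul_mem hy (NonUnitalAlgebra.subset_adjoin 𝕜 ⟨t, rfl⟩)), ?_⟩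
        simp only [map_mul, hyev, aeval_X, add_mul, Unitization.inl_mul_inr,
          Unitization.inr_mul, Unitization.inr_add]
        simp
    obtain ⟨y, hy, hyev⟩ := key P
    rw [hcc] at hyev
    simp only [Unitization.inl_zero, zero_add] at hyev
    have : (y : Unitization 𝕜 X) = (x : Unitization 𝕜 X) := by rw [← hyev, hev]
    rwa [Unitization.inr_injective this] at hy

/-! ### constant coefficients under substitution -/

/-- constant coefficient of a substitution. -/
theorem cc_aeval' {K T V : Type} [CommSemiring K] (f : T → MvPolynomial V K)
    (hf : ∀ t, constantCoeff (f t) = 0) (Q : MvPolynomial T K) :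
    constantCoeff (aeval f Q) = constantCoeff Q := by
  induction Q using MvPolynomial.induction_on with
  | C a => simp [algebraMap_eq]
  | add p q hp hq => rw [map_add, map_add, hp, hq, map_add]
  | mul_X p t hp =>
    rw [map_mul, map_mul, hp, aeval_X, hf t, mul_zero, map_mul, constantCoeff_X, mul_zero]

/-- constant coefficient of a substitution, hypotheses only on variables. -/
theorem cc_aeval_vars {K T V : Type} [CommSemiring K] (f : T → MvPolynomial V K)
    (Q : MvPolynomial T K) (hf : ∀ t ∈ Q.vars, constantCoeff (f t) = 0) :
    constantCoeff (aeval f Q) = constantCoeff Q := by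
  classical
  have h1 : aeval f Q = aeval (fun t => if t ∈ Q.vars then f t else 0) Q := by
    rw [aeval_eq_eval₂Hom, aeval_eq_eval₂Hom]
    exact eval₂Hom_congr' rfl (fun i h1 _ => (if_pos h1).symm) rfl
  rw [h1, cc_aeval']
  intro t
  by_cases h : t ∈ Q.vars <;> simp [h, hf]

/-! ### The triangular substitution -/

section Theta

variable {K : Type} [Field K] {V T₀ : Type}
variable (rnk : V → Ordinal) (s₀ : T₀ → V) (D₀ : T₀ → MvPolynomial V K) (c₀ : T₀ → K)
  (A₀ : T₀ → MvPolynomial V K)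

open Classical in
/-- the triangular substitution. -/
noncomputable def Theta : V → MvPolynomial V K :=
  (InvImage.wf rnk Ordinal.lt_wf).fix (fun v rec =>
    if h : ∃ t, s₀ t = v then
      (c₀ h.choose)⁻¹ • (A₀ h.choose -
        aeval (fun w => if hw : rnk w < rnk v then rec w hw else 0) (D₀ h.choose))
    else MvPolynomial.X v)

open Classical in
theorem Theta_eq (v : V) : Theta rnk s₀ D₀ c₀ A₀ v =
    if h : ∃ t, s₀ t = v then
      (c₀ h.choose)⁻¹ • (A₀ h.choose -
        aeval (fun w => if _ : rnk w < rnk v then Theta rnk s₀ D₀ c₀ A₀ w else 0)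
          (D₀ h.choose))
    else MvPolynomial.X v :=
  WellFounded.fix_eq _ _ v

theorem Theta_off (v : V) (hv : ¬ ∃ t, s₀ t = v) :
    Theta rnk s₀ D₀ c₀ A₀ v = MvPolynomial.X v := by
  classical
  rw [Theta_eq]
  exact dif_neg hv

variable (hs : Function.Injective s₀) (hD : ∀ t w, w ∈ (D₀ t).vars → rnk w < rnk (s₀ t))

include hs hD in
theorem Theta_on (t : T₀) :
    Theta rnk s₀ D₀ c₀ A₀ (s₀ t) =
      (c₀ t)⁻¹ • (A₀ t - aeval (Theta rnk s₀ D₀ c₀ A₀) (D₀ t)) := by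
  classical
  rw [Theta_eq]
  have hex : ∃ t', s₀ t' = s₀ t := ⟨t, rfl⟩
  rw [dif_pos hex]
  have ht' : hex.choose = t := hs hex.choose_spec
  rw [ht']
  congr 1
  congr 1
  rw [aeval_eq_eval₂Hom, aeval_eq_eval₂Hom]
  refine eval₂Hom_congr' rfl ?_ rfl
  intro w hw _
  rw [dif_pos (hD t w hw)]

include hs hD in
theorem Theta_vars (hA : ∀ t w, w ∈ (A₀ t).vars → rnk w ≤ rnk (s₀ t)) (v : V) :
    ∀ w, w ∈ (Theta rnk s₀ D₀ c₀ A₀ v).vars → rnk w ≤ rnk v := by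
  classical
  refine (InvImage.wf rnk Ordinal.lt_wf).induction
    (C := fun v => ∀ w, w ∈ (Theta rnk s₀ D₀ c₀ A₀ v).vars → rnk w ≤ rnk v) v ?_
  intro v IH w hw
  by_cases hex : ∃ t, s₀ t = v
  · obtain ⟨t, rfl⟩ := hex
    rw [Theta_on rnk s₀ D₀ c₀ A₀ hs hD t] at hw
    rcases eq_or_ne (c₀ t)⁻¹ 0 with hc | hc
    · rw [hc, zero_smul] at hw
      simp [vars_0] at hw
    · rw [smul_eq_C_mul, vars_C_mul _ hc] at hw
      rcases Finset.mem_union.mp (vars_sub_subset _ hw) with h | h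
      · exact hA t w h
      · rw [aeval_eq_bind₁] at h
        obtain ⟨w', hw', hww'⟩ := mem_vars_bind₁ _ _ h
        exact le_of_lt (lt_of_le_of_lt (IH w' (hD t w' hw') w hww') (hD t w' hw'))
  · rw [Theta_off rnk s₀ D₀ c₀ A₀ v hex, vars_X] at hw
    rw [Finset.mem_singleton.mp hw]

include hs hD in
theorem Theta_cc (hA : ∀ t, constantCoeff (A₀ t) = 0)
    (hD0 : ∀ t, constantCoeff (D₀ t) = 0) (v : V) :
    constantCoeff (Theta rnk s₀ D₀ c₀ A₀ v) = 0 := by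
  classical
  refine (InvImage.wf rnk Ordinal.lt_wf).induction
    (C := fun v => constantCoeff (Theta rnk s₀ D₀ c₀ A₀ v) = 0) v ?_
  intro v IH
  by_cases hex : ∃ t, s₀ t = v
  · obtain ⟨t, rfl⟩ := hex
    rw [Theta_on rnk s₀ D₀ c₀ A₀ hs hD t]
    rw [smul_eq_C_mul, map_mul, constantCoeff_C, map_sub, hA t]
    have : constantCoeff (aeval (Theta rnk s₀ D₀ c₀ A₀) (D₀ t)) = constantCoeff (D₀ t) := by
      refine cc_aeval_vars _ _ fun w hw => IH w (hD t w hw)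
    rw [this, hD0 t, sub_zero, mul_zero]
  · rw [Theta_off rnk s₀ D₀ c₀ A₀ v hex, constantCoeff_X]

include hs hD in
theorem Theta_gen (hc : ∀ t, c₀ t ≠ 0) (t : T₀) :
    aeval (Theta rnk s₀ D₀ c₀ A₀) (D₀ t + c₀ t • MvPolynomial.X (s₀ t)) = A₀ t := by
  rw [map_add, map_smul, aeval_X, Theta_on rnk s₀ D₀ c₀ A₀ hs hD t, smul_smul,
    mul_inv_cancel₀ (hc t), one_smul, add_comm, sub_add_cancel]

include hs hD in
theorem free_perturbed (hc : ∀ t, c₀ t ≠ 0)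
    (Q : MvPolynomial T₀ K) (hQ : Q ≠ 0) :
    aeval (fun t => D₀ t + c₀ t • MvPolynomial.X (s₀ t)) Q ≠ 0 := by
  intro h0
  have h1 : aeval (Theta rnk s₀ D₀ c₀ (fun t => MvPolynomial.X (s₀ t)))
      (aeval (fun t => D₀ t + c₀ t • MvPolynomial.X (s₀ t)) Q) = 0 := by rw [h0, map_zero]
  rw [comp_aeval_apply] at h1
  have h2 : (fun t => aeval (Theta rnk s₀ D₀ c₀ (fun t' => MvPolynomial.X (s₀ t')))
      (D₀ t + c₀ t • MvPolynomial.X (s₀ t))) = fun t => (MvPolynomial.X (s₀ t) :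
        MvPolynomial V K) := by
    funext t
    exact Theta_gen rnk s₀ D₀ c₀ _ hs hD hc t
  rw [h2] at h1
  have h3 : rename s₀ Q = 0 := by rw [rename_eq_aeval]; exact h1
  have h4 : rename s₀ Q = rename s₀ 0 := by rw [h3, map_zero]
  exact hQ (rename_injective s₀ hs h4)

end Theta

/-! ### Transfinite selection of fresh variables -/

theorem exists_selection {T V E' : Type} [LinearOrder E'] [WellFoundedLT E']
    (emb : T → E') (hemb : Function.Injective emb)
    (hseg : ∀ x : E', #{y : E' // y < x} < #V) (hV : Cardinal.aleph0 ≤ #V)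
    (bad : T → Set V) (hbad : ∀ t, #(bad t) < #V) :
    ∃ s : T → V, Function.Injective s ∧ ∀ t, s t ∉ bad t := by
  have wfr : WellFounded (fun a b : T => emb a < emb b) := InvImage.wf emb wellFounded_lt
  have key : ∀ (A : Set V), #A < #V → ∃ v, v ∉ A := by
    intro A hA
    by_contra h
    push_neg at h
    rw [Set.eq_univ_of_forall h, Cardinal.mk_univ] at hA
    exact lt_irrefl _ hA
  have hcard : ∀ (t : T) (g : {t' // emb t' < emb t} → V),
      #(bad t ∪ Set.range g : Set V) < #V := by
    intro t g
    refine lt_of_le_of_lt (Cardinal.mk_union_le _ _) ?_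
    refine Cardinal.add_lt_of_lt hV (hbad t) (lt_of_le_of_lt Cardinal.mk_range_le ?_)
    refine lt_of_le_of_lt ?_ (hseg (emb t))
    exact Cardinal.mk_le_of_injective
      (f := fun p : {t' // emb t' < emb t} => (⟨emb p.1, p.2⟩ : {y : E' // y < emb t}))
      (fun a b hab => Subtype.ext (hemb (by simpa using congrArg Subtype.val hab)))
  let s : T → V := wfr.fix (fun t rec => (key _ (hcard t (fun p => rec p.1 p.2))).choose)
  have hseq : ∀ t, s t =
      (key _ (hcard t (fun p : {t' // emb t' < emb t} => s p.1))).choose := by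
    intro t
    exact wfr.fix_eq _ t
  have hspec : ∀ t, s t ∉ (bad t ∪ Set.range (fun p : {t' // emb t' < emb t} => s p.1)) := by
    intro t
    rw [hseq t]
    exact (key _ (hcard t (fun p : {t' // emb t' < emb t} => s p.1))).choose_spec
  refine ⟨s, ?_, fun t => fun hmem => hspec t (Set.mem_union_left _ hmem)⟩
  have hlt : ∀ a b : T, emb a < emb b → s a ≠ s b := by
    intro a b hab heq
    exact hspec b (Set.mem_union_right _ ⟨⟨a, hab⟩, heq⟩)
  intro a b hab
  rcases lt_trichotomy (emb a) (emb b) with h | h | h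
  · exact absurd hab (hlt a b h)
  · exact hemb h
  · exact absurd hab.symm (hlt b a h)


/-! ### The main construction -/

theorem reverse [TopologicalSpace X] [IsTopologicalRing X] [ContinuousSMul 𝕜 X]
    (M : Set X) (α : Cardinal) (hinf : Cardinal.aleph0 ≤ α) (hw : tsWeight X ≤ α)
    (h : StronglyDenseAlgebrable 𝕜 M α) : InfStronglyDenseAlgebrable 𝕜 M α α := by
  classical
  obtain ⟨F, hSFG, hFcard, hFdense, hFsub⟩ := h
  have hα0 : α ≠ 0 := (aleph0_pos.trans_le hinf).ne'
  -- polynomial evaluation bridge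
  have hfree : FreeFam 𝕜 (Subtype.val : F → X) := freeFam_of_isSFG hSFG
  have hrangeF : Set.range (Subtype.val : F → X) = F := Subtype.range_val
  -- a basis of size at most α
  have hne : {c : Cardinal | ∃ B : Set (Set X),
      TopologicalSpace.IsTopologicalBasis B ∧ #↥B = c}.Nonempty :=
    ⟨_, {U | IsOpen U}, TopologicalSpace.isTopologicalBasis_opens, rfl⟩
  obtain ⟨B, hB, hBcard⟩ := csInf_mem hne
  have hBα : #↥B ≤ α := by unfold tsWeight at hw; exact hBcard.trans_le hw
  -- index of nonempty basic open sets
  let J := {U : Set X // U ∈ B ∧ U.Nonempty}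
  have hJα : #J ≤ α :=
    le_trans (Cardinal.mk_le_mk_of_subset (fun U (hU : U ∈ B ∧ U.Nonempty) => hU.1)) hBα
  have hJne : Nonempty J := by
    have h0 : (0 : X) ∈ ⋃₀ B := by rw [hB.sUnion_eq]; trivial
    obtain ⟨U, hU, h0U⟩ := h0
    exact ⟨⟨U, hU, ⟨0, h0U⟩⟩⟩
  -- choose the dense witnesses dᵦ (as polynomials) and their values xdᵦ
  have hchoice : ∀ β : J, ∃ (P : MvPolynomial F 𝕜) (x : X), constantCoeff P = 0 ∧
      MvPolynomial.aeval (fun v : F => ((v : X) : Unitization 𝕜 X)) P = (x : Unitization 𝕜 X) ∧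
      x ∈ (β : Set X) := by
    rintro ⟨U, hU, hUne⟩
    obtain ⟨x, hxU, hxA⟩ := hFdense.inter_open_nonempty U (hB.isOpen hU) hUne
    obtain ⟨P, hcc, hev⟩ := (mem_adjoin_iff (Subtype.val : F → X) x).mp
      (by rw [hrangeF]; exact hxA)
    exact ⟨P, x, hcc, hev, hxU⟩
  choose d xd hdcc hdev hdmem using hchoice
  -- the well-ordered rank on variables
  have hEcard : #(Cardinal.ord α).ToType = α := by rw [Cardinal.mk_toType, Cardinal.card_ord]
  have hVcard : #F = α := hFcard
  obtain ⟨e⟩ : Nonempty (F ≃ (Cardinal.ord α).ToType) := Cardinal.eq.mp (hVcard.trans hEcard.symm)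
  let rnk : F → Ordinal := fun v =>
    @Ordinal.typein (Cardinal.ord α).ToType (· < ·) isWellOrder_lt (e v)
  have hrnk_lt : ∀ v w : F, rnk v < rnk w ↔ e v < e w := fun v w =>
    @Ordinal.typein_lt_typein (Cardinal.ord α).ToType (· < ·) isWellOrder_lt (e v) (e w)
  -- the index type ι of the family, and T
  have hιne : Nonempty α.out := Cardinal.mk_ne_zero_iff.mp (by rw [Cardinal.mk_out]; exact hα0)
  let T := α.out × J × α.out
  have hTα : #T ≤ α := by
    have h1 : #T = #α.out * (#J * #α.out) := by
      simp [T, Cardinal.mk_prod, Cardinal.lift_id]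
    rw [h1, Cardinal.mk_out]
    calc α * (#J * α) ≤ α * (α * α) := by
          exact mul_le_mul_right (mul_le_mul_left hJα _) _
      _ = α := by rw [Cardinal.mul_eq_self hinf, Cardinal.mul_eq_self hinf]
  obtain ⟨emb⟩ : Nonempty (T ↪ (Cardinal.ord α).ToType) :=
    Cardinal.le_def _ _ |>.mp (hTα.trans_eq hEcard.symm)
  -- selection of fresh variables
  have hseg : ∀ x : (Cardinal.ord α).ToType, #{y // y < x} < #F := by
    intro x
    rw [hVcard]
    exact Cardinal.mk_Iio_ord_toType x
  have hbad : ∀ t : T, #({v : F | ∃ w ∈ (d t.2.1).vars, ¬ rnk w < rnk v} : Set F) < #F := by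
    intro t
    rcases Finset.eq_empty_or_nonempty (d t.2.1).vars with hv | hv
    · have : ({v : F | ∃ w ∈ (d t.2.1).vars, ¬ rnk w < rnk v} : Set F) = ∅ := by
        ext v; simp [hv]
      rw [this]
      simp only [Cardinal.mk_emptyCollection]
      rw [hVcard]
      exact aleph0_pos.trans_le hinf
    · obtain ⟨w₀, hw₀, hmax⟩ := Finset.exists_max_image (d t.2.1).vars (fun w => e w) hv
      have hsub : ({v : F | ∃ w ∈ (d t.2.1).vars, ¬ rnk w < rnk v} : Set F) ⊆
          (fun v : F => e v) ⁻¹' (Set.Iic (e w₀)) := by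
        rintro v ⟨w, hw, hlt⟩
        have h1 : ¬ e w < e v := fun hc => hlt ((hrnk_lt w v).mpr hc)
        exact le_trans (not_lt.mp h1) (hmax w hw)
      refine lt_of_le_of_lt (Cardinal.mk_le_mk_of_subset hsub) ?_
      refine lt_of_le_of_lt (Cardinal.mk_preimage_of_injective _ _ e.injective) ?_
      rw [hVcard, ← Set.Iio_insert]
      refine lt_of_le_of_lt (Cardinal.mk_insert_le) ?_
      exact Cardinal.add_lt_of_lt hinf (Cardinal.mk_Iio_ord_toType _)
        (one_lt_aleph0.trans_le hinf)
  obtain ⟨s, hsinj, hsbad⟩ := exists_selection emb emb.injective hseg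
    (by rw [hVcard]; exact hinf) _ hbad
  have hrk : ∀ t : T, ∀ w ∈ (d t.2.1).vars, rnk w < rnk (s t) := by
    intro t w hw
    by_contra hlt
    exact hsbad t ⟨w, hw, hlt⟩
  -- choose small nonzero scalars via continuity
  have hscalar : ∀ t : T, ∃ a : 𝕜, a ≠ 0 ∧ xd t.2.1 + a • ((s t : X)) ∈ (t.2.1 : Set X) := by
    intro t
    have hcont : Continuous (fun a : 𝕜 => xd t.2.1 + a • ((s t : X))) :=
      continuous_const.add (continuous_id.smul continuous_const)
    have hopen : IsOpen (t.2.1 : Set X) := hB.isOpen t.2.1.2.1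
    have hmem0 : (fun a : 𝕜 => xd t.2.1 + a • ((s t : X))) 0 ∈ (t.2.1 : Set X) := by
      simpa using hdmem t.2.1
    have hpre : (fun a : 𝕜 => xd t.2.1 + a • ((s t : X))) ⁻¹' (t.2.1 : Set X) ∈
        nhds (0 : 𝕜) := hcont.continuousAt.preimage_mem_nhds (hopen.mem_nhds hmem0)
    have hnb : ((fun a : 𝕜 => xd t.2.1 + a • ((s t : X))) ⁻¹' (t.2.1 : Set X) ∩
        ({0}ᶜ : Set 𝕜)).Nonempty := by
      have h1 : (fun a : 𝕜 => xd t.2.1 + a • ((s t : X))) ⁻¹' (t.2.1 : Set X) ∈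
          nhdsWithin (0 : 𝕜) ({0}ᶜ : Set 𝕜) := mem_nhdsWithin_of_mem_nhds hpre
      have h2 : ({0}ᶜ : Set 𝕜) ∈ nhdsWithin (0 : 𝕜) ({0}ᶜ : Set 𝕜) := self_mem_nhdsWithin
      haveI : (nhdsWithin (0:𝕜) ({0}ᶜ : Set 𝕜)).NeBot := NormedField.nhdsNE_neBot (0:𝕜)
      exact Filter.nonempty_of_mem (Filter.inter_mem h1 h2)
    obtain ⟨a, ha1, ha2⟩ := hnb
    exact ⟨a, fun h0 => ha2 (by rw [h0]; exact Set.mem_singleton 0), ha1⟩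
  choose c hc0 hcmem using hscalar
  -- the generators
  let gp : α.out → J × α.out → MvPolynomial F 𝕜 := fun κ p =>
    d p.1 + c (κ, p) • MvPolynomial.X (s (κ, p))
  let gx : α.out → J × α.out → X := fun κ p => xd p.1 + c (κ, p) • ((s (κ, p) : X))
  have hev_gp : ∀ κ p, MvPolynomial.aeval (fun v : F => ((v : X) : Unitization 𝕜 X)) (gp κ p)
      = ((gx κ p : X) : Unitization 𝕜 X) := by
    intro κ p
    show MvPolynomial.aeval _ (d p.1 + c (κ, p) • MvPolynomial.X (s (κ, p))) = _
    rw [map_add, map_smul, aeval_X, hdev p.1]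
    show _ = ((xd p.1 + c (κ, p) • ((s (κ, p) : X)) : X) : Unitization 𝕜 X)
    rw [Unitization.inr_add, Unitization.inr_smul]
  have hgp_cc : ∀ κ p, constantCoeff (gp κ p) = 0 := by
    intro κ p
    show constantCoeff (d p.1 + c (κ, p) • MvPolynomial.X (s (κ, p))) = 0
    rw [map_add, hdcc p.1, zero_add, smul_eq_C_mul, map_mul, constantCoeff_C,
      constantCoeff_X, mul_zero]
  -- polynomial-level freeness of each block
  have hsblock : ∀ κ, Function.Injective (fun p : J × α.out => s (κ, p)) := by
    intro κ a b hab
    have := hsinj hab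
    exact (Prod.mk.injEq _ _ _ _).mp this |>.2
  have hpoly_free : ∀ κ, ∀ Q : MvPolynomial (J × α.out) 𝕜, Q ≠ 0 →
      MvPolynomial.aeval (gp κ) Q ≠ 0 := by
    intro κ Q hQ
    exact free_perturbed rnk (fun p : J × α.out => s (κ, p)) (fun p => d p.1)
      (fun p => c (κ, p)) (hsblock κ) (fun p w hw => hrk (κ, p) w hw)
      (fun p => hc0 (κ, p)) Q hQ
  have hFfree : ∀ κ, FreeFam 𝕜 (gx κ) := by
    intro κ Q hQ hQcc
    have h1 : MvPolynomial.aeval (fun p => ((gx κ p : X) : Unitization 𝕜 X)) Q =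
        MvPolynomial.aeval (fun v : F => ((v : X) : Unitization 𝕜 X))
          (MvPolynomial.aeval (gp κ) Q) := by
      rw [comp_aeval_apply]
      exact congrArg (fun f => MvPolynomial.aeval f Q) (funext fun p => (hev_gp κ p).symm)
    rw [h1]
    exact hfree _ (hpoly_free κ Q hQ) (by rw [cc_aeval' (gp κ) (hgp_cc κ) Q]; exact hQcc)
  -- each gx κ lands in the adjoin of F
  have hgx_adj : ∀ κ p, gx κ p ∈ NonUnitalAlgebra.adjoin 𝕜 F := by
    intro κ p
    have h1 : xd p.1 ∈ NonUnitalAlgebra.adjoin 𝕜 F := by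
      rw [← hrangeF]
      exact (mem_adjoin_iff (Subtype.val : F → X) _).mpr ⟨d p.1, hdcc p.1, hdev p.1⟩
    have h2 : ((s (κ, p) : X)) ∈ NonUnitalAlgebra.adjoin 𝕜 F :=
      NonUnitalAlgebra.subset_adjoin 𝕜 (s (κ, p)).2
    exact add_mem h1 (SMulMemClass.smul_mem _ h2)
  -- assemble
  refine ⟨α.out, fun κ => Set.range (gx κ), Cardinal.mk_out α, fun κ => ⟨?_, ?_, ?_, ?_⟩, ?_⟩
  · -- IsSFG
    exact freeFam.isSFG (hFfree κ)
  · -- cardinality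
    rw [Cardinal.mk_range_eq _ (freeFam.injective (hFfree κ))]
    have : #(J × α.out) = #J * α := by simp [Cardinal.mk_prod, Cardinal.lift_id, Cardinal.mk_out]
    rw [this]
    exact Cardinal.mul_eq_right hinf hJα (Cardinal.mk_ne_zero_iff.mpr hJne)
  · -- density
    rw [hB.dense_iff]
    intro o ho hone
    refine ⟨gx κ (⟨o, ho, hone⟩, Classical.arbitrary α.out), ?_, ?_⟩
    · exact hcmem (κ, (⟨o, ho, hone⟩, Classical.arbitrary α.out))
    · exact NonUnitalAlgebra.subset_adjoin 𝕜 ⟨(⟨o, ho, hone⟩, Classical.arbitrary α.out), rfl⟩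
  · -- inclusion in M ∪ {0}
    refine subset_trans ?_ hFsub
    have hle : NonUnitalAlgebra.adjoin 𝕜 (Set.range (gx κ)) ≤ NonUnitalAlgebra.adjoin 𝕜 F :=
      NonUnitalAlgebra.adjoin_le (by rintro _ ⟨p, rfl⟩; exact hgx_adj κ p)
    exact hle
  · -- pairwise disjointness
    intro κ₁ κ₂ hκ
    rw [eq_bot_iff]
    intro x hx
    rw [NonUnitalAlgebra.mem_bot]
    obtain ⟨hx1, hx2⟩ := NonUnitalAlgebra.mem_inf.mp hx
    obtain ⟨Q₁, hQ₁cc, hQ₁ev⟩ := (mem_adjoin_iff (gx κ₁) x).mp hx1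
    obtain ⟨Q₂, hQ₂cc, hQ₂ev⟩ := (mem_adjoin_iff (gx κ₂) x).mp hx2
    -- transfer to the polynomial side
    have hkey : ∀ κ (Q : MvPolynomial (J × α.out) 𝕜),
        MvPolynomial.aeval (fun p => ((gx κ p : X) : Unitization 𝕜 X)) Q =
        MvPolynomial.aeval (fun v : F => ((v : X) : Unitization 𝕜 X))
          (MvPolynomial.aeval (gp κ) Q) := by
      intro κ Q
      rw [comp_aeval_apply]
      exact congrArg (fun f => MvPolynomial.aeval f Q) (funext fun p => (hev_gp κ p).symm)
    have hp1cc : constantCoeff (MvPolynomial.aeval (gp κ₁) Q₁) = 0 := by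
      rw [cc_aeval' (gp κ₁) (hgp_cc κ₁) Q₁]; exact hQ₁cc
    have hp2cc : constantCoeff (MvPolynomial.aeval (gp κ₂) Q₂) = 0 := by
      rw [cc_aeval' (gp κ₂) (hgp_cc κ₂) Q₂]; exact hQ₂cc
    have hpeq : MvPolynomial.aeval (gp κ₁) Q₁ = MvPolynomial.aeval (gp κ₂) Q₂ := by
      by_contra hne'
      refine hfree (MvPolynomial.aeval (gp κ₁) Q₁ - MvPolynomial.aeval (gp κ₂) Q₂)
        (sub_ne_zero.mpr hne') (by rw [map_sub, hp1cc, hp2cc, sub_zero]) ?_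
      rw [map_sub, ← hkey κ₁ Q₁, ← hkey κ₂ Q₂, hQ₁ev, hQ₂ev, sub_self]
    -- the substitution killing the κ₁-block
    set Θ := Theta rnk (fun p : J × α.out => s (κ₁, p)) (fun p => d p.1)
      (fun p => c (κ₁, p)) (fun _ => (0 : MvPolynomial F 𝕜)) with hΘ
    have hΘkill : ∀ p, MvPolynomial.aeval Θ (gp κ₁ p) = 0 := by
      intro p
      exact Theta_gen rnk _ _ _ _ (hsblock κ₁) (fun p w hw => hrk (κ₁, p) w hw)
        (fun p => hc0 (κ₁, p)) p
    have hφ1 : MvPolynomial.aeval Θ (MvPolynomial.aeval (gp κ₁) Q₁) = 0 := by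
      rw [comp_aeval_apply]
      have : (fun p => MvPolynomial.aeval Θ (gp κ₁ p)) =
          (fun _ : J × α.out => (0 : MvPolynomial F 𝕜)) := funext hΘkill
      rw [this, aeval_zero']
      simp [hQ₁cc]
    -- on the κ₂-block, the substitution acts as another perturbed family
    have hΘoff : ∀ p : J × α.out, Θ (s (κ₂, p)) = MvPolynomial.X (s (κ₂, p)) := by
      intro p
      refine Theta_off rnk _ _ _ _ _ ?_
      rintro ⟨p', hp'⟩
      exact hκ ((Prod.mk.injEq _ _ _ _).mp (hsinj hp')).1
    have hφgp2 : ∀ p, MvPolynomial.aeval Θ (gp κ₂ p) =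
        MvPolynomial.aeval Θ (d p.1) + c (κ₂, p) • MvPolynomial.X (s (κ₂, p)) := by
      intro p
      show MvPolynomial.aeval Θ (d p.1 + c (κ₂, p) • MvPolynomial.X (s (κ₂, p))) = _
      rw [map_add, map_smul, aeval_X, hΘoff p]
    have hD' : ∀ p : J × α.out, ∀ w ∈ (MvPolynomial.aeval Θ (d p.1)).vars,
        rnk w < rnk (s (κ₂, p)) := by
      intro p w hw
      rw [aeval_eq_bind₁] at hw
      obtain ⟨w', hw', hww'⟩ := mem_vars_bind₁ _ _ hw
      have h1 : rnk w ≤ rnk w' := Theta_vars rnk _ _ _ _ (hsblock κ₁)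
        (fun p w hw => hrk (κ₁, p) w hw) (fun t w hw => by simp [vars_0] at hw) w' w hww'
      exact lt_of_le_of_lt h1 (hrk (κ₂, p) w' hw')
    have hQ₂zero : Q₂ = 0 := by
      by_contra hQ₂ne
      have hfree2 := free_perturbed rnk (fun p : J × α.out => s (κ₂, p))
        (fun p => MvPolynomial.aeval Θ (d p.1)) (fun p => c (κ₂, p)) (hsblock κ₂)
        hD' (fun p => hc0 (κ₂, p)) Q₂ hQ₂ne
      refine hfree2 ?_
      have : MvPolynomial.aeval (fun p : J × α.out => MvPolynomial.aeval Θ (d p.1) +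
          c (κ₂, p) • MvPolynomial.X (s (κ₂, p))) Q₂ =
          MvPolynomial.aeval Θ (MvPolynomial.aeval (gp κ₂) Q₂) := by
        rw [comp_aeval_apply]
        exact congrArg (fun f => MvPolynomial.aeval f Q₂) (funext fun p => (hφgp2 p).symm)
      rw [this, ← hpeq, hφ1]
    have : (x : Unitization 𝕜 X) = 0 := by
      rw [← hQ₂ev, hQ₂zero, map_zero]
    have h0 : (x : Unitization 𝕜 X) = ((0 : X) : Unitization 𝕜 X) := by
      rw [this, Unitization.inr_zero]
    exact Unitization.inr_injective h0

end Stmt16Aux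

/-- Let `X` be a commutative topological algebra over `𝕜` (`𝕜 = ℝ` or `ℂ`),
`M ⊆ X` and `α ≥ ℵ₀` a cardinal with `α ≥ w(X)`.  Then `M` is `α`-infinitely strongly
`α`-dense-algebrable iff `M` is strongly `α`-dense-algebrable. -/
theorem stmt16 [TopologicalSpace X] [IsTopologicalRing X] [ContinuousSMul 𝕜 X]
    (M : Set X) (α : Cardinal) (hinf : Cardinal.aleph0 ≤ α) (hw : tsWeight X ≤ α) :
    InfStronglyDenseAlgebrable 𝕜 M α α ↔ StronglyDenseAlgebrable 𝕜 M α := by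
  constructor
  · rintro ⟨ι, Ffam, hι, hprops, -⟩
    have hne : Nonempty ι := Cardinal.mk_ne_zero_iff.mp
      (by rw [hι]; exact (Cardinal.aleph0_pos.trans_le hinf).ne')
    obtain ⟨i⟩ := hne
    obtain ⟨h1, h2, h3, h4⟩ := hprops i
    exact ⟨Ffam i, h1, h2, h3, h4⟩
  · exact Stmt16Aux.reverse (𝕜 := 𝕜) M α hinf hw
end

section
/- Let X be a commutative topological α-generated algebra over K (K = ℝ or ℂ) and M a subset of X. If X is first-countable and α ≥ ℵ₀, then M is α-infinitely strongly α-dense-algebrable if, and only if, M is strongly α-dense-algebrable. -/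
universe u

open Cardinal

variable (𝕜 : Type) [RCLike 𝕜] {X : Type} [NonUnitalCommRing X] [Module 𝕜 X]
  [SMulCommClass 𝕜 X X] [IsScalarTower 𝕜 X X]

open Classical in
/-- Recursive substitution sending "head" variables back to distinguished polynomials,
by downward recursion on a level function. -/
noncomputable def sAux (𝕜 : Type) [RCLike 𝕜] {V : Type} (lvl : V → ℕ) {n : ℕ}
    (tl hd : Fin n → V) (c : Fin n → 𝕜) (hlt : ∀ i, lvl (tl i) < lvl (hd i)) :
    V → MvPolynomial (Fin n) 𝕜 := fun v =>
  if h : ∃ i, hd i = v then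
    (c h.choose)⁻¹ • (MvPolynomial.X h.choose - sAux 𝕜 lvl tl hd c hlt (tl h.choose))
  else 0
termination_by v => lvl v
decreasing_by
  · have hs := h.choose_spec; exact lt_of_lt_of_le (hlt _) (le_of_eq (by rw [hs]))

lemma sAux_hd (𝕜 : Type) [RCLike 𝕜] {V : Type} (lvl : V → ℕ) {n : ℕ}
    (tl hd : Fin n → V) (c : Fin n → 𝕜) (hlt : ∀ i, lvl (tl i) < lvl (hd i))
    (hinj : Function.Injective hd) (i : Fin n) :
    sAux 𝕜 lvl tl hd c hlt (hd i) =
      (c i)⁻¹ • (MvPolynomial.X i - sAux 𝕜 lvl tl hd c hlt (tl i)) := by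
  rw [sAux]
  have h : ∃ j, hd j = hd i := ⟨i, rfl⟩
  rw [dif_pos h]
  have : h.choose = i := hinj h.choose_spec
  rw [this]

lemma adjoin_rep {S : Set X} {z : X} (hz : z ∈ NonUnitalAlgebra.adjoin 𝕜 S) :
    ∃ (n : ℕ) (u : Fin n → X) (P : MvPolynomial (Fin n) 𝕜), (∀ i, u i ∈ S) ∧
      Function.Injective u ∧ MvPolynomial.constantCoeff P = 0 ∧
      (z : Unitization 𝕜 X) = MvPolynomial.aeval (fun i => (u i : Unitization 𝕜 X)) P := by
  classical
  have main : ∃ T : Finset X, ↑T ⊆ S ∧ ∃ P : MvPolynomial {a : X // a ∈ T} 𝕜,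
      MvPolynomial.constantCoeff P = 0 ∧
      (z : Unitization 𝕜 X) =
        MvPolynomial.aeval (fun t : {a : X // a ∈ T} => ((t : X) : Unitization 𝕜 X)) P := by
    induction hz using NonUnitalAlgebra.adjoin_induction with
    | mem x hx =>
        refine ⟨{x}, by simpa using hx,
          MvPolynomial.X ⟨x, Finset.mem_singleton_self x⟩, by simp, by simp⟩
    | zero => exact ⟨∅, by simp, 0, by simp, by simp⟩
    | add x y hx hy ihx ihy =>
        obtain ⟨T₁, hT₁, P₁, hc₁, he₁⟩ := ihx
        obtain ⟨T₂, hT₂, P₂, hc₂, he₂⟩ := ihy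
        refine ⟨T₁ ∪ T₂, by simp [Set.union_subset_iff, hT₁, hT₂], ?_⟩
        let i₁ : {a : X // a ∈ T₁} → {a : X // a ∈ T₁ ∪ T₂} :=
          fun a => ⟨a, Finset.mem_union_left _ a.2⟩
        let i₂ : {a : X // a ∈ T₂} → {a : X // a ∈ T₁ ∪ T₂} :=
          fun a => ⟨a, Finset.mem_union_right _ a.2⟩
        refine ⟨MvPolynomial.rename i₁ P₁ + MvPolynomial.rename i₂ P₂,
          by simp [MvPolynomial.constantCoeff_rename, hc₁, hc₂], ?_⟩
        rw [Unitization.inr_add, map_add, MvPolynomial.aeval_rename,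
          MvPolynomial.aeval_rename, he₁, he₂]
        rfl
    | mul x y hx hy ihx ihy =>
        obtain ⟨T₁, hT₁, P₁, hc₁, he₁⟩ := ihx
        obtain ⟨T₂, hT₂, P₂, hc₂, he₂⟩ := ihy
        refine ⟨T₁ ∪ T₂, by simp [Set.union_subset_iff, hT₁, hT₂], ?_⟩
        let i₁ : {a : X // a ∈ T₁} → {a : X // a ∈ T₁ ∪ T₂} :=
          fun a => ⟨a, Finset.mem_union_left _ a.2⟩
        let i₂ : {a : X // a ∈ T₂} → {a : X // a ∈ T₁ ∪ T₂} :=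
          fun a => ⟨a, Finset.mem_union_right _ a.2⟩
        refine ⟨MvPolynomial.rename i₁ P₁ * MvPolynomial.rename i₂ P₂,
          by simp [MvPolynomial.constantCoeff_rename, hc₁, hc₂], ?_⟩
        rw [Unitization.inr_mul, map_mul, MvPolynomial.aeval_rename,
          MvPolynomial.aeval_rename, he₁, he₂]
        rfl
    | smul r x hx ihx =>
        obtain ⟨T₁, hT₁, P₁, hc₁, he₁⟩ := ihx
        refine ⟨T₁, hT₁, r • P₁, ?_, ?_⟩
        · rw [MvPolynomial.constantCoeff_smul, hc₁, smul_zero]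
        · rw [Unitization.inr_smul, map_smul, he₁]
  obtain ⟨T, hTS, P, hPc, hPe⟩ := main
  let e := T.equivFin
  refine ⟨T.card, fun k => ((e.symm k : {a : X // a ∈ T}) : X), MvPolynomial.rename e P,
    fun k => hTS (e.symm k).2, ?_, by simp [MvPolynomial.constantCoeff_rename, hPc], ?_⟩
  · exact Subtype.val_injective.comp e.symm.injective
  · rw [MvPolynomial.aeval_rename, hPe]
    simp [Function.comp_def]

lemma IsSFG.linearIndep {S : Set X} (hS : IsSFG 𝕜 S) :
    LinearIndependent 𝕜 (fun v : S => (v : X)) := by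
  rw [linearIndependent_iff']
  intro s gc hsum i hi
  by_contra hne
  classical
  set n := s.card with hn
  let e := s.equivFin
  set x : Fin n → X := fun k => ((e.symm k : S) : X) with hxdef
  have hxmem : ∀ k, x k ∈ S := fun k => ((e.symm k : S)).2
  have hxinj : Function.Injective x :=
    Subtype.val_injective.comp (Subtype.val_injective.comp e.symm.injective)
  set P : MvPolynomial (Fin n) 𝕜 :=
    ∑ k : Fin n, MvPolynomial.C (gc (e.symm k)) * MvPolynomial.X k with hPdef
  have hPc : MvPolynomial.constantCoeff P = 0 := by
    simp [hPdef, map_sum]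
  have hco : MvPolynomial.coeff (Finsupp.single (e ⟨i, hi⟩) 1) P = gc i := by
    rw [hPdef, MvPolynomial.coeff_sum]
    rw [Finset.sum_eq_single (e ⟨i, hi⟩)]
    · simp [MvPolynomial.coeff_C_mul, MvPolynomial.coeff_X']
    · intro b _ hb
      rw [MvPolynomial.coeff_C_mul, MvPolynomial.coeff_X', if_neg, mul_zero]
      intro hcon
      exact hb (Finsupp.single_left_injective (one_ne_zero (α := ℕ)) hcon)
    · intro h; exact absurd (Finset.mem_univ _) h
  have hPne : P ≠ 0 := by
    intro h
    rw [h, MvPolynomial.coeff_zero] at hco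
    exact hne hco.symm
  have hval : MvPolynomial.aeval (fun k => (x k : Unitization 𝕜 X)) P = 0 := by
    rw [hPdef, map_sum]
    have hterm : ∀ k : Fin n, MvPolynomial.aeval (fun k => (x k : Unitization 𝕜 X))
        (MvPolynomial.C (gc (e.symm k)) * MvPolynomial.X k)
        = ((gc (e.symm k) • x k : X) : Unitization 𝕜 X) := by
      intro k
      rw [map_mul, MvPolynomial.aeval_C, MvPolynomial.aeval_X, Unitization.inr_smul,
        ← Algebra.smul_def]
    rw [Finset.sum_congr rfl fun k _ => hterm k]
    have hs0 : (∑ k : Fin n, gc (e.symm k) • x k) = 0 := by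
      calc (∑ k : Fin n, gc (e.symm k) • x k)
          = ∑ j : {v : S // v ∈ s}, gc j • ((j : S) : X) :=
            Equiv.sum_comp e.symm (fun j : {v : S // v ∈ s} => gc j • ((j : S) : X))
        _ = ∑ j ∈ s, gc j • (j : X) := Finset.sum_coe_sort s (fun j => gc j • (j : X))
        _ = 0 := hsum
    calc (∑ k : Fin n, ((gc (e.symm k) • x k : X) : Unitization 𝕜 X))
        = (((∑ k : Fin n, gc (e.symm k) • x k : X)) : Unitization 𝕜 X) :=
          (map_sum (Unitization.inrNonUnitalAlgHom 𝕜 X) _ _).symm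
      _ = 0 := by rw [hs0, Unitization.inr_zero]
  exact hS n x hxmem hxinj P hPne hPc hval

/-- Let `X` be a commutative topological `α`-generated algebra over `𝕜`
(`α` is the smallest cardinality of a generator set of `X`) and `M ⊆ X`.  If `X` is
first-countable and `α ≥ ℵ₀`, then `M` is `α`-infinitely strongly `α`-dense-algebrable iff
`M` is strongly `α`-dense-algebrable. -/
theorem stmt17 [TopologicalSpace X] [IsTopologicalRing X] [ContinuousSMul 𝕜 X]
    [FirstCountableTopology X] (M : Set X) (α : Cardinal)
    (hgen : ∃ S : Set X, NonUnitalAlgebra.adjoin 𝕜 S = (⊤ : NonUnitalSubalgebra 𝕜 X) ∧ #↥S = α)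
    (hmin : ∀ S : Set X, NonUnitalAlgebra.adjoin 𝕜 S = (⊤ : NonUnitalSubalgebra 𝕜 X) → α ≤ #↥S)
    (hinf : Cardinal.aleph0 ≤ α) :
    InfStronglyDenseAlgebrable 𝕜 M α α ↔ StronglyDenseAlgebrable 𝕜 M α := by
  constructor
  · rintro ⟨ι, Ffam, hι, hprop, -⟩
    have hne : Nonempty ι := by
      rw [← Cardinal.mk_ne_zero_iff, hι]
      exact ne_of_gt (lt_of_lt_of_le Cardinal.aleph0_pos hinf)
    obtain ⟨i⟩ := hne
    exact ⟨Ffam i, (hprop i).1, (hprop i).2.1, (hprop i).2.2.1, (hprop i).2.2.2⟩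
  · rintro ⟨F, hSFG, hcard, hdense, hsub⟩
    classical
    have hinfF : Infinite (↥F) := Cardinal.infinite_iff.mpr (by rw [hcard]; exact hinf)
    have hFN : #(↥F × ℕ) = #(↥F) := by
      rw [Cardinal.mk_prod, Cardinal.lift_id, Cardinal.lift_id, Cardinal.mk_nat,
        Cardinal.mul_aleph0_eq (by rw [hcard]; exact hinf)]
    have hFFN : #(↥F × ↥F × ℕ) = #(↥F) := by
      rw [Cardinal.mk_prod, Cardinal.lift_id, Cardinal.lift_id, hFN,
        Cardinal.mul_eq_self (by rw [hcard]; exact hinf)]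
    obtain ⟨E⟩ : Nonempty (↥F ≃ ↥F × ℕ) := Cardinal.eq.mp hFN.symm
    obtain ⟨ψE⟩ : Nonempty (↥F × ↥F × ℕ ≃ ↥F) := Cardinal.eq.mp hFFN
    set lvl : ↥F → ℕ := fun v => (E v).2 with hlvl
    set hd : ↥F × ↥F × ℕ → ↥F :=
      fun r => E.symm (ψE (r.1, (E r.2.1).1, r.2.2), (E r.2.1).2 + 1) with hhd
    have hhdlvl : ∀ r, lvl (hd r) = lvl r.2.1 + 1 := fun r => by
      simp [hhd, hlvl]
    have hhdinj : Function.Injective hd := by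
      intro r r' h
      have h2 := E.symm.injective h
      rw [Prod.ext_iff] at h2
      obtain ⟨h2a, h2b⟩ := h2
      have h4 := ψE.injective h2a
      rw [Prod.ext_iff, Prod.ext_iff] at h4
      obtain ⟨ha, hb, hc⟩ := h4
      have h2b' : (E r.2.1).2 + 1 = (E r'.2.1).2 + 1 := h2b
      have hsnd : (E r.2.1).2 = (E r'.2.1).2 := by omega
      have hx : r.2.1 = r'.2.1 := E.injective (Prod.ext hb hsnd)
      exact Prod.ext ha (Prod.ext hx hc)
    obtain ⟨U, hU⟩ := (nhds (0 : X)).exists_antitone_basis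
    have hUmem : ∀ n, U n ∈ nhds (0 : X) := fun n => hU.1.mem_of_mem trivial
    have hts : ∀ r : ↥F × ↥F × ℕ, ∃ c : 𝕜, c ≠ 0 ∧ ‖c‖ < 1 ∧ c • (hd r : X) ∈ U r.2.2 := by
      intro r
      have hcont : ContinuousAt (fun c : 𝕜 => c • (hd r : X)) 0 :=
        (continuous_id.smul continuous_const).continuousAt
      have hmem0 : U r.2.2 ∈ nhds ((fun c : 𝕜 => c • (hd r : X)) 0) := by
        rw [show (fun c : 𝕜 => c • (hd r : X)) 0 = 0 from zero_smul _ _]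
        exact hUmem r.2.2
      have hpre : {c : 𝕜 | c • (hd r : X) ∈ U r.2.2} ∈ nhds (0 : 𝕜) :=
        hcont.preimage_mem_nhds hmem0
      obtain ⟨ε, hε, hball⟩ := Metric.mem_nhds_iff.mp hpre
      have hcpos : (0 : ℝ) < min ε 1 / 2 := by positivity
      refine ⟨((min ε 1 / 2 : ℝ) : 𝕜), ?_, ?_, ?_⟩
      · intro h
        have := congrArg (norm) h
        rw [RCLike.norm_ofReal, abs_of_pos hcpos, norm_zero] at this
        exact absurd this (ne_of_gt hcpos)
      · rw [RCLike.norm_ofReal, abs_of_pos hcpos]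
        have hmle : min ε 1 ≤ 1 := min_le_right _ _
        linarith
      · apply hball
        rw [Metric.mem_ball, dist_zero_right, RCLike.norm_ofReal, abs_of_pos hcpos]
        calc min ε 1 / 2 < min ε 1 := by
              apply half_lt_self
              positivity
          _ ≤ ε := min_le_left _ _
    choose t ht0 htn htU using hts
    set g : ↥F × ↥F × ℕ → X := fun r => (r.2.1 : X) + t r • (hd r : X) with hgdef
    have hlinear := linearIndependent_iff.mp (IsSFG.linearIndep 𝕜 hSFG)
    have hginj : Function.Injective g := by
      intro r r' heq
      by_cases hhdeq : hd r = hd r'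
      · exact hhdinj hhdeq
      exfalso
      set l : ↥F →₀ 𝕜 :=
        (Finsupp.single r.2.1 (1:𝕜) + Finsupp.single (hd r) (t r))
          - (Finsupp.single r'.2.1 (1:𝕜) + Finsupp.single (hd r') (t r')) with hl
      have hlc : Finsupp.linearCombination 𝕜 (fun v : ↥F => (v : X)) l = 0 := by
        rw [hl, map_sub, map_add, map_add]
        simp only [Finsupp.linearCombination_single, one_smul]
        rw [sub_eq_zero]
        exact heq
      have hl0 := hlinear l hlc
      have hath := DFunLike.congr_fun hl0 (hd r)
      rw [hl] at hath
      simp only [Finsupp.sub_apply, Finsupp.add_apply, Finsupp.single_apply,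
        Finsupp.coe_zero, Pi.zero_apply] at hath
      have h1 : ¬ (r.2.1 = hd r) := by
        intro h
        have := hhdlvl r
        rw [← h] at this
        omega
      have h2 : ¬ (hd r' = hd r) := fun h => hhdeq h.symm
      rw [if_pos trivial, if_neg h2, if_neg h1] at hath
      simp only [zero_add, add_zero] at hath
      by_cases h3 : r'.2.1 = hd r
      · rw [if_pos h3] at hath
        have ht1 : t r = 1 := sub_eq_zero.mp hath
        have h4 := htn r
        rw [ht1, norm_one] at h4
        exact lt_irrefl _ h4
      · rw [if_neg h3, sub_zero] at hath
        exact ht0 r hath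
    set G : ↥F → Set X := fun κ => Set.range (fun p : ↥F × ℕ => g (κ, p.1, p.2)) with hG
    have hGall : ∀ κ, G κ ⊆ Set.range g := by
      rintro κ _ ⟨p, rfl⟩
      exact ⟨(κ, p.1, p.2), rfl⟩
    -- the union is an SFG
    have hSFGall : IsSFG 𝕜 (Set.range g) := by
      intro n x hxmem hxinj P hPne hPc
      choose r hr using fun i => hxmem i
      have hrinj : Function.Injective r := fun i j h => hxinj (by rw [← hr i, ← hr j, h])
      set tl : Fin n → ↥F := fun i => (r i).2.1 with htl
      set hdi : Fin n → ↥F := fun i => hd (r i) with hhdi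
      set c : Fin n → 𝕜 := fun i => t (r i) with hcdef
      have hhdiinj : Function.Injective hdi := fun i j h => hrinj (hhdinj h)
      have hlt : ∀ i, lvl (tl i) < lvl (hdi i) := fun i => by
        show lvl ((r i).2.1) < lvl (hd (r i))
        rw [hhdlvl (r i)]
        omega
      set ℓ : Fin n → MvPolynomial (↥F) 𝕜 :=
        fun i => MvPolynomial.X (tl i) + MvPolynomial.C (c i) * MvPolynomial.X (hdi i) with hℓ
      set Q' : MvPolynomial (↥F) 𝕜 := MvPolynomial.aeval ℓ P with hQ'
      have hB : MvPolynomial.aeval (sAux 𝕜 lvl tl hdi c hlt) Q' = P := by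
        rw [hQ', MvPolynomial.comp_aeval_apply]
        have hstep : ∀ i, MvPolynomial.aeval (sAux 𝕜 lvl tl hdi c hlt) (ℓ i)
            = MvPolynomial.X i := by
          intro i
          rw [hℓ]
          simp only [map_add, map_mul, MvPolynomial.aeval_X, MvPolynomial.aeval_C]
          rw [sAux_hd 𝕜 lvl tl hdi c hlt hhdiinj i, ← Algebra.smul_def, smul_smul,
            mul_inv_cancel₀ (ht0 (r i)), one_smul, add_sub_cancel]
        rw [show (fun i => MvPolynomial.aeval (sAux 𝕜 lvl tl hdi c hlt) (ℓ i))
            = (fun i => (MvPolynomial.X i : MvPolynomial (Fin n) 𝕜)) from funext hstep]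
        exact MvPolynomial.aeval_X_left_apply P
      have hA : MvPolynomial.aeval (fun v : ↥F => ((v : X) : Unitization 𝕜 X)) Q'
          = MvPolynomial.aeval (fun i => (x i : Unitization 𝕜 X)) P := by
        rw [hQ', MvPolynomial.comp_aeval_apply]
        have hfuneq : (fun i => (MvPolynomial.aeval (fun v : ↥F => ((v : X) : Unitization 𝕜 X)))
            (ℓ i)) = fun i => ((x i : X) : Unitization 𝕜 X) := by
          funext i
          show (MvPolynomial.aeval (fun v : ↥F => ((v : X) : Unitization 𝕜 X)))
            (MvPolynomial.X (tl i) + MvPolynomial.C (c i) * MvPolynomial.X (hdi i)) = _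
          simp only [map_add, map_mul, MvPolynomial.aeval_X, MvPolynomial.aeval_C]
          rw [← Algebra.smul_def, ← Unitization.inr_smul, ← Unitization.inr_add, ← hr i]
        rw [hfuneq]
      have hC : MvPolynomial.constantCoeff Q' = 0 := by
        have h1 : (MvPolynomial.aeval (fun _ : ↥F => (0:𝕜))) Q'
            = MvPolynomial.constantCoeff Q' := by
          rw [MvPolynomial.aeval_zero']
          simp
        rw [← h1, hQ', MvPolynomial.comp_aeval_apply]
        have hstep : ∀ i, (MvPolynomial.aeval (fun _ : ↥F => (0:𝕜))) (ℓ i) = 0 := by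
          intro i
          rw [hℓ]
          simp
        rw [show (fun i => (MvPolynomial.aeval (fun _ : ↥F => (0:𝕜))) (ℓ i))
            = (fun _ : Fin n => (0:𝕜)) from funext hstep]
        rw [MvPolynomial.aeval_zero', hPc, map_zero]
      have hQ'ne : Q' ≠ 0 := fun h => hPne (by rw [← hB, h, map_zero])
      obtain ⟨m, f, hfinj, Q, hQeq⟩ := MvPolynomial.exists_fin_rename Q'
      have hQne : Q ≠ 0 := fun h => hQ'ne (by rw [hQeq, h, map_zero])
      have hQc : MvPolynomial.constantCoeff Q = 0 := by
        have h2 := MvPolynomial.constantCoeff_rename f Q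
        rw [← hQeq, hC] at h2
        exact h2.symm
      have happ := hSFG m (fun k => ((f k : ↥F) : X)) (fun k => (f k).2)
        (Subtype.val_injective.comp hfinj) Q hQne hQc
      intro hcon
      apply happ
      rw [← hA, hQeq, MvPolynomial.aeval_rename] at hcon
      simpa [Function.comp_def] using hcon
    have hsfgG : ∀ κ, IsSFG 𝕜 (G κ) := fun κ n x hx hinj =>
      hSFGall n x (fun i => hGall κ (hx i)) hinj
    -- density
    have hdenseG : ∀ κ : ↥F,
        Dense ((NonUnitalAlgebra.adjoin 𝕜 (G κ) : NonUnitalSubalgebra 𝕜 X) : Set X) := by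
      intro κ
      have hFc : ∀ v : ↥F, (v : X) ∈
          closure ((NonUnitalAlgebra.adjoin 𝕜 (G κ) : NonUnitalSubalgebra 𝕜 X) : Set X) := by
        intro v
        have h0 : Filter.Tendsto (fun n : ℕ => t (κ, v, n) • (hd (κ, v, n) : X))
            Filter.atTop (nhds 0) := hU.tendsto (fun n => htU (κ, v, n))
        have htend : Filter.Tendsto (fun n : ℕ => g (κ, v, n)) Filter.atTop (nhds (v : X)) := by
          have h2 := h0.const_add (v : X)
          rw [add_zero] at h2
          exact h2
        refine mem_closure_of_tendsto htend (Filter.Eventually.of_forall fun n => ?_)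
        exact NonUnitalAlgebra.subset_adjoin 𝕜 ⟨(v, n), rfl⟩
      have hle : NonUnitalAlgebra.adjoin 𝕜 F ≤
          (NonUnitalAlgebra.adjoin 𝕜 (G κ)).topologicalClosure :=
        NonUnitalAlgebra.adjoin_le (fun v hv => hFc ⟨v, hv⟩)
      rw [dense_iff_closure_eq]
      apply Set.eq_univ_of_univ_subset
      calc (Set.univ : Set X)
          = closure ((NonUnitalAlgebra.adjoin 𝕜 F : NonUnitalSubalgebra 𝕜 X) : Set X) :=
            (hdense.closure_eq).symm
        _ ⊆ closure (closure ((NonUnitalAlgebra.adjoin 𝕜 (G κ) :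
              NonUnitalSubalgebra 𝕜 X) : Set X)) := closure_mono hle
        _ = closure ((NonUnitalAlgebra.adjoin 𝕜 (G κ) :
              NonUnitalSubalgebra 𝕜 X) : Set X) := closure_closure
    -- cardinality
    have hcardG : ∀ κ, #(↥(G κ)) = α := by
      intro κ
      have hinj : Function.Injective (fun p : ↥F × ℕ => g (κ, p.1, p.2)) := by
        intro pp qq h
        have h2 := hginj h
        rw [Prod.ext_iff, Prod.ext_iff] at h2
        exact Prod.ext h2.2.1 h2.2.2
      rw [hG]
      rw [Cardinal.mk_range_eq _ hinj, hFN, hcard]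
    -- contained in M ∪ {0}
    have hGadjF : ∀ κ, G κ ⊆
        ((NonUnitalAlgebra.adjoin 𝕜 F : NonUnitalSubalgebra 𝕜 X) : Set X) := by
      rintro κ _ ⟨pp, rfl⟩
      exact add_mem (NonUnitalAlgebra.subset_adjoin 𝕜 pp.1.2)
        (SMulMemClass.smul_mem _ (NonUnitalAlgebra.subset_adjoin 𝕜 (hd (κ, pp.1, pp.2)).2))
    have hsubM : ∀ κ,
        ((NonUnitalAlgebra.adjoin 𝕜 (G κ) : NonUnitalSubalgebra 𝕜 X) : Set X) ⊆ M ∪ {0} := by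
      intro κ y hy
      have hle : NonUnitalAlgebra.adjoin 𝕜 (G κ) ≤ NonUnitalAlgebra.adjoin 𝕜 F :=
        NonUnitalAlgebra.adjoin_le (hGadjF κ)
      exact hsub (hle hy)
    -- trivial intersections
    have hint : ∀ κ κ' : ↥F, κ ≠ κ' →
        NonUnitalAlgebra.adjoin 𝕜 (G κ) ⊓ NonUnitalAlgebra.adjoin 𝕜 (G κ') =
          (⊥ : NonUnitalSubalgebra 𝕜 X) := by
      intro κ κ' hneq
      refine le_antisymm ?_ bot_le
      intro z hz
      rw [NonUnitalAlgebra.mem_bot]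
      obtain ⟨hz1, hz2⟩ := NonUnitalAlgebra.mem_inf.mp hz
      obtain ⟨m₁, u, P, humem, huinj, hPc, hPe⟩ := adjoin_rep 𝕜 hz1
      obtain ⟨m₂, v, Q₂, hvmem, hvinj, hQc, hQe⟩ := adjoin_rep 𝕜 hz2
      have hdisj : ∀ i j, u i ≠ v j := by
        intro i j h
        obtain ⟨pu, hpu⟩ := humem i
        obtain ⟨pv, hpv⟩ := hvmem j
        apply hneq
        have h2 := hginj (show g (κ, pu.1, pu.2) = g (κ', pv.1, pv.2) from
          hpu.trans (h.trans hpv.symm))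
        exact congrArg Prod.fst h2
      set w : Fin m₁ ⊕ Fin m₂ → X := Sum.elim u v with hw
      have hwinj : Function.Injective w := by
        rintro (a|a) (b|b) h
        · exact congrArg Sum.inl (huinj h)
        · exact absurd h (hdisj a b)
        · exact absurd h.symm (hdisj b a)
        · exact congrArg Sum.inr (hvinj h)
      set w' : Fin (m₁+m₂) → X := w ∘ finSumFinEquiv.symm with hw'
      have hw'inj : Function.Injective w' := hwinj.comp finSumFinEquiv.symm.injective
      have hwmem : ∀ ab, w ab ∈ Set.range g := by
        rintro (a|a)
        · exact hGall κ (humem a)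
        · exact hGall κ' (hvmem a)
      have hw'mem : ∀ k, w' k ∈ Set.range g := fun k => hwmem _
      set R₀ : MvPolynomial (Fin m₁ ⊕ Fin m₂) 𝕜 :=
        MvPolynomial.rename Sum.inl P - MvPolynomial.rename Sum.inr Q₂ with hR₀
      set R : MvPolynomial (Fin (m₁+m₂)) 𝕜 :=
        MvPolynomial.rename (finSumFinEquiv : Fin m₁ ⊕ Fin m₂ ≃ Fin (m₁+m₂)) R₀ with hRdef
      have hRc : MvPolynomial.constantCoeff R = 0 := by
        rw [hRdef, hR₀, MvPolynomial.constantCoeff_rename, map_sub,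
          MvPolynomial.constantCoeff_rename, MvPolynomial.constantCoeff_rename, hPc, hQc,
          sub_zero]
      have hRval : MvPolynomial.aeval (fun k => (w' k : Unitization 𝕜 X)) R = 0 := by
        rw [hRdef, MvPolynomial.aeval_rename, hR₀, map_sub, MvPolynomial.aeval_rename,
          MvPolynomial.aeval_rename]
        have e1 : (((fun k => ((w' k : X) : Unitization 𝕜 X)) ∘ (finSumFinEquiv :
            Fin m₁ ⊕ Fin m₂ ≃ Fin (m₁+m₂))) ∘ Sum.inl) = fun i => ((u i : X) : Unitization 𝕜 X) := by
          funext i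
          simp [hw', hw, Function.comp]
        have e2 : (((fun k => ((w' k : X) : Unitization 𝕜 X)) ∘ (finSumFinEquiv :
            Fin m₁ ⊕ Fin m₂ ≃ Fin (m₁+m₂))) ∘ Sum.inr) = fun j => ((v j : X) : Unitization 𝕜 X) := by
          funext j
          simp [hw', hw, Function.comp]
        rw [e1, e2, ← hPe, ← hQe, sub_self]
      have hR0 : R = 0 := by
        by_contra hR
        exact (hSFGall (m₁+m₂) w' hw'mem hw'inj R hR hRc) hRval
      have hR₀0 : R₀ = 0 := by
        have hinjR := MvPolynomial.rename_injective (R := 𝕜)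
          (finSumFinEquiv : Fin m₁ ⊕ Fin m₂ ≃ Fin (m₁+m₂)) finSumFinEquiv.injective
        apply hinjR
        rw [← hRdef, hR0, map_zero]
      have hPQ : MvPolynomial.rename (Sum.inl : Fin m₁ → Fin m₁ ⊕ Fin m₂) P
          = MvPolynomial.rename Sum.inr Q₂ := by
        have := sub_eq_zero.mp (hR₀ ▸ hR₀0)
        exact this
      have hP0 : P = 0 := by
        have happ := congrArg (MvPolynomial.aeval
          (Sum.elim (MvPolynomial.X : Fin m₁ → MvPolynomial (Fin m₁) 𝕜) (fun _ => 0))) hPQ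
        rw [MvPolynomial.aeval_rename, MvPolynomial.aeval_rename, Sum.elim_comp_inl,
          Sum.elim_comp_inr] at happ
        rw [MvPolynomial.aeval_X_left_apply, MvPolynomial.aeval_zero', hQc, map_zero] at happ
        exact happ
      rw [hP0, map_zero] at hPe
      exact Unitization.inr_injective (by rw [hPe, Unitization.inr_zero])
    exact ⟨↥F, G, hcard, fun κ => ⟨hsfgG κ, hcardG κ, hdenseG κ, hsubM κ⟩, hint⟩
end

section
/- Equip ℝ^∞ with the coordinatewise product (x_n)·(y_n) := (x_n y_n). Then ℝ^∞ is a commutative topological algebra (the multiplication is jointly continuous for the inductive limit topology), and ℝ^∞ has no proper dense subalgebra: every subalgebra of ℝ^∞ that is dense equals ℝ^∞. In particular, ℝ^∞ is ℵ₀-dense-algebrable in itself but not ℵ₀-infinitely ℵ₀-dense-algebrable. -/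
open Cardinal

/-- The submodule of `ℕ → ℝ` consisting of finitely supported sequences. -/
def RinfSubmodule : Submodule ℝ (ℕ → ℝ) where
  carrier := { f | ∃ N : ℕ, ∀ n, N ≤ n → f n = 0 }
  add_mem' := by
    rintro f g ⟨N, hN⟩ ⟨M, hM⟩
    exact ⟨max N M, fun n hn => by
      simp [hN n (le_trans (le_max_left _ _) hn), hM n (le_trans (le_max_right _ _) hn)]⟩
  zero_mem' := ⟨0, fun n _ => rfl⟩
  smul_mem' := by
    rintro c f ⟨N, hN⟩
    exact ⟨N, fun n hn => by simp [hN n hn]⟩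

/-- `ℝ^∞`, the space of finitely supported real sequences, as a type synonym (so that it does
not inherit the subspace topology; it will be equipped with the inductive limit topology). -/
def Rinf : Type := RinfSubmodule

instance : AddCommGroup Rinf := inferInstanceAs (AddCommGroup RinfSubmodule)
noncomputable instance : Module ℝ Rinf := inferInstanceAs (Module ℝ RinfSubmodule)

/-- The inclusion `u_n : ℝⁿ → ℝ^∞`. -/
def uMap (n : ℕ) (x : Fin n → ℝ) : Rinf :=
  (⟨fun i => if h : i < n then x ⟨i, h⟩ else 0,
    ⟨n, fun _ hm => dif_neg (Nat.not_lt.mpr hm)⟩⟩ : RinfSubmodule)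

/-- The inductive limit (final) topology on `ℝ^∞` with respect to the inclusions
`u_n : ℝⁿ → ℝ^∞`, where each `ℝⁿ` carries the Euclidean (product) topology. -/
instance RinfTopology : TopologicalSpace Rinf :=
  ⨆ n : ℕ, TopologicalSpace.coinduced (uMap n) inferInstance

/-- The canonical basis vector `e_m` of `ℝ^∞` (`1` in coordinate `m`, `0` elsewhere). -/
noncomputable def eRinf (m : ℕ) : Rinf :=
  (⟨fun i => if i = m then 1 else 0, ⟨m + 1, fun k hk => if_neg (by omega)⟩⟩ : RinfSubmodule)

/-- The underlying sequence of an element of `ℝ^∞`. -/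
def Rinf.seq (x : Rinf) : ℕ → ℝ := (show ↥RinfSubmodule from x).1

/-- The coordinatewise product on `ℝ^∞`: `(x_n)·(y_n) := (x_n y_n)`. -/
noncomputable instance : Mul Rinf :=
  ⟨fun x y => (⟨fun n => x.seq n * y.seq n, by
    obtain ⟨N, hN⟩ := (show ↥RinfSubmodule from x).2
    exact ⟨N, fun n hn => by
      have : x.seq n = 0 := hN n hn
      simp [this]⟩⟩ : RinfSubmodule)⟩

/-- `W` is a (non-unital) subalgebra of `ℝ^∞`: a linear subspace closed under the product. -/
def IsSubalgebraRinf (W : Submodule ℝ Rinf) : Prop :=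
  ∀ x ∈ W, ∀ y ∈ W, x * y ∈ W

/-- `W` is the subalgebra of `ℝ^∞` generated by `S`: the smallest subalgebra containing `S`. -/
def GeneratesAlg (S : Set Rinf) (W : Submodule ℝ Rinf) : Prop :=
  IsSubalgebraRinf W ∧ S ⊆ (W : Set Rinf) ∧
    ∀ W' : Submodule ℝ Rinf, IsSubalgebraRinf W' → S ⊆ (W' : Set Rinf) → W ≤ W'

/-- `W` is an `ℵ₀`-generated subalgebra of `ℝ^∞`: the smallest cardinality of a generator set
of `W` is `ℵ₀`. -/
def IsAleph0GenAlg (W : Submodule ℝ Rinf) : Prop :=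
  (∃ S : Set Rinf, GeneratesAlg S W ∧ #↥S = Cardinal.aleph0) ∧
  ∀ S : Set Rinf, GeneratesAlg S W → Cardinal.aleph0 ≤ #↥S
lemma Rinf.ext' {x y : Rinf} (h : ∀ k, x.seq k = y.seq k) : x = y := Subtype.ext (funext h)

lemma Rinf.spec (x : Rinf) : ∃ N, ∀ n, N ≤ n → x.seq n = 0 := (show ↥RinfSubmodule from x).2

lemma isOpen_Rinf_iff {U : Set Rinf} : IsOpen U ↔ ∀ n, IsOpen (uMap n ⁻¹' U) :=
  Iff.trans (isOpen_iSup_iff (t := fun n => TopologicalSpace.coinduced (uMap n) inferInstance))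
    (forall_congr' fun _ => isOpen_coinduced)

/-- Open box around `a`. -/
def rbox (a : Rinf) (ε : ℕ → ℝ) : Set Rinf := {x | ∀ k, |x.seq k - a.seq k| < ε k}

lemma mem_rbox_self (a : Rinf) {ε : ℕ → ℝ} (hε : ∀ k, 0 < ε k) : a ∈ rbox a ε := by
  intro k; simpa using hε k

lemma rbox_isOpen (a : Rinf) (ε : ℕ → ℝ) : IsOpen (rbox a ε) := by
  rw [isOpen_Rinf_iff]
  intro n
  by_cases hc : ∀ k, n ≤ k → |a.seq k| < ε k
  · have : uMap n ⁻¹' rbox a ε = ⋂ i : Fin n, {x : Fin n → ℝ | |x i - a.seq i| < ε i} := by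
      ext x
      simp only [Set.mem_preimage, rbox, Set.mem_setOf_eq, Set.mem_iInter]
      constructor
      · intro h i
        have := h i
        simpa only [Rinf.seq, uMap, dif_pos i.isLt] using this
      · intro h k
        show |(if hk : k < n then x ⟨k, hk⟩ else 0) - a.seq k| < ε k
        by_cases hk : k < n
        · simpa only [dif_pos hk] using h ⟨k, hk⟩
        · simp only [dif_neg hk, zero_sub, abs_neg]
          exact hc k (Nat.le_of_not_lt hk)
    rw [this]
    exact isOpen_iInter_of_finite fun i =>
      (isOpen_Iio.preimage (by continuity : Continuous fun x : Fin n → ℝ => |x i - a.seq i|))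
  · have : uMap n ⁻¹' rbox a ε = ∅ := by
      push_neg at hc
      obtain ⟨k, hk, hke⟩ := hc
      ext x
      simp only [Set.mem_preimage, Set.mem_empty_iff_false, iff_false]
      intro h
      have := h k
      rw [show (uMap n x).seq k = 0 from dif_neg (Nat.not_lt.mpr hk)] at this
      rw [zero_sub, abs_neg] at this
      exact absurd this (not_lt.mpr hke)
    rw [this]; exact isOpen_empty
section
variable (a : Rinf) (U : Set Rinf) (N : ℕ)

/-- Closed box in `ℝⁿ` around the truncation of `a`. -/
def Kbox (n : ℕ) (ε : ℕ → ℝ) : Set (Fin n → ℝ) := {x | ∀ i : Fin n, |x i - a.seq i| ≤ ε i}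

lemma Kbox_compact (n : ℕ) (ε : ℕ → ℝ) : IsCompact (Kbox a n ε) := by
  have : Kbox a n ε = Set.univ.pi (fun i : Fin n => Set.Icc (a.seq i - ε i) (a.seq i + ε i)) := by
    ext x
    simp only [Kbox, Set.mem_pi, Set.mem_univ, forall_true_left, Set.mem_Icc, Set.mem_setOf_eq]
    refine forall_congr' fun i => ?_
    rw [abs_le]
    constructor <;> intro h <;> constructor <;> linarith [h.1, h.2]
  rw [this]
  exact isCompact_univ_pi fun i => isCompact_Icc

noncomputable def epsChain
    (base : {ε : ℕ → ℝ // (∀ k, 0 < ε k) ∧ Kbox a N ε ⊆ uMap N ⁻¹' U})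
    (hstep : ∀ n, N ≤ n → ∀ ε : ℕ → ℝ, Kbox a n ε ⊆ uMap n ⁻¹' U →
      ∃ δ : ℝ, 0 < δ ∧ Kbox a (n+1) (Function.update ε n δ) ⊆ uMap (n+1) ⁻¹' U) :
    ∀ m : ℕ, {ε : ℕ → ℝ // (∀ k, 0 < ε k) ∧ Kbox a (N+m) ε ⊆ uMap (N+m) ⁻¹' U} :=
  fun m => Nat.rec base
    (fun m p =>
      ⟨Function.update p.1 (N+m) (hstep (N+m) (Nat.le_add_right N m) p.1 p.2.2).choose,
       fun k => by
         rcases eq_or_ne k (N+m) with rfl | hk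
         · rw [Function.update_self]
           exact (hstep (N+m) (Nat.le_add_right N m) p.1 p.2.2).choose_spec.1
         · rw [Function.update_of_ne hk]
           exact p.2.1 k,
       (hstep (N+m) (Nat.le_add_right N m) p.1 p.2.2).choose_spec.2⟩) m

variable {base : {ε : ℕ → ℝ // (∀ k, 0 < ε k) ∧ Kbox a N ε ⊆ uMap N ⁻¹' U}}
variable {hstep : ∀ n, N ≤ n → ∀ ε : ℕ → ℝ, Kbox a n ε ⊆ uMap n ⁻¹' U →
      ∃ δ : ℝ, 0 < δ ∧ Kbox a (n+1) (Function.update ε n δ) ⊆ uMap (n+1) ⁻¹' U}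

lemma epsChain_succ (m k : ℕ) (hk : k ≠ N + m) :
    (epsChain a U N base hstep (m+1)).1 k = (epsChain a U N base hstep m).1 k :=
  Function.update_of_ne hk _ _

lemma epsChain_agree (d m k : ℕ) (hk : k < N + m) :
    (epsChain a U N base hstep (m+d)).1 k = (epsChain a U N base hstep m).1 k := by
  induction d with
  | zero => rfl
  | succ d ih =>
    calc (epsChain a U N base hstep ((m+d)+1)).1 k
        = (epsChain a U N base hstep (m+d)).1 k :=
          epsChain_succ a U N (m+d) k (by omega)
      _ = _ := ih

end

lemma exists_rbox_subset {U : Set Rinf} (hUo : IsOpen U) {a : Rinf} (ha : a ∈ U) :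
    ∃ ε : ℕ → ℝ, (∀ k, 0 < ε k) ∧ rbox a ε ⊆ U := by
  rw [isOpen_Rinf_iff] at hUo
  obtain ⟨N, hN⟩ := a.spec
  -- base case
  have hbase : ∃ ε : ℕ → ℝ, (∀ k, 0 < ε k) ∧ Kbox a N ε ⊆ uMap N ⁻¹' U := by
    have haN : uMap N (fun i : Fin N => a.seq i) = a := by
      apply Rinf.ext'
      intro k
      show (if h : k < N then a.seq k else 0) = a.seq k
      by_cases h : k < N
      · rw [dif_pos h]
      · rw [dif_neg h, hN k (Nat.le_of_not_lt h)]
    have hmem : (fun i : Fin N => a.seq i) ∈ uMap N ⁻¹' U := by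
      simp only [Set.mem_preimage, haN]; exact ha
    obtain ⟨r, hr, hball⟩ := Metric.isOpen_iff.mp (hUo N) _ hmem
    refine ⟨fun _ => r/2, fun _ => by linarith, fun x hx => ?_⟩
    apply hball
    rw [Metric.mem_ball]
    have : dist x (fun i : Fin N => a.seq i) ≤ r/2 := by
      rw [dist_pi_le_iff (by linarith)]
      intro i
      rw [Real.dist_eq]
      exact hx i
    linarith
  -- step
  have hstep : ∀ n, N ≤ n → ∀ ε : ℕ → ℝ, Kbox a n ε ⊆ uMap n ⁻¹' U →
      ∃ δ : ℝ, 0 < δ ∧ Kbox a (n+1) (Function.update ε n δ) ⊆ uMap (n+1) ⁻¹' U := by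
    intro n hn ε hKε
    have hgc : Continuous (fun (p : (Fin n → ℝ) × ℝ) (i : Fin (n+1)) =>
        if h : (i : ℕ) < n then p.1 ⟨i, h⟩ else p.2) := by
      apply continuous_pi
      intro i
      by_cases h : (i : ℕ) < n
      · simp only [dif_pos h]
        exact (continuous_apply _).comp continuous_fst
      · simp only [dif_neg h]
        exact continuous_snd
    have hJ : IsOpen ((fun (p : (Fin n → ℝ) × ℝ) (i : Fin (n+1)) =>
        if h : (i : ℕ) < n then p.1 ⟨i, h⟩ else p.2) ⁻¹' (uMap (n+1) ⁻¹' U)) :=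
      (hUo (n+1)).preimage hgc
    have hsub : (Kbox a n ε) ×ˢ ({0} : Set ℝ) ⊆ (fun (p : (Fin n → ℝ) × ℝ) (i : Fin (n+1)) =>
        if h : (i : ℕ) < n then p.1 ⟨i, h⟩ else p.2) ⁻¹' (uMap (n+1) ⁻¹' U) := by
      rintro ⟨x, t⟩ ⟨hx, ht⟩
      have ht0 : t = 0 := ht
      subst ht0
      have key : uMap (n+1) (fun i : Fin (n+1) => if h : (i : ℕ) < n then x ⟨i, h⟩ else 0)
          = uMap n x := by
        apply Rinf.ext'
        intro k
        show (if hk : k < n+1 then (if h : k < n then x ⟨k, h⟩ else 0) else 0)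
            = (if h : k < n then x ⟨k, h⟩ else 0)
        by_cases h : k < n
        · simp only [dif_pos (Nat.lt_succ_of_lt h), dif_pos h]
        · by_cases h2 : k < n+1 <;> simp [h, h2]
      show uMap (n+1) _ ∈ U
      rw [key]
      exact hKε hx
    obtain ⟨δ, hδ, hth⟩ :=
      ((Kbox_compact a n ε).prod isCompact_singleton).exists_thickening_subset_open hJ hsub
    refine ⟨δ/2, by linarith, ?_⟩
    intro y hy
    have hyg : y = (fun i : Fin (n+1) =>
        if h : (i : ℕ) < n then (fun j : Fin n => y ⟨j, Nat.lt_succ_of_lt j.isLt⟩) ⟨i, h⟩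
        else y ⟨n, Nat.lt_succ_self n⟩) := by
      funext i
      by_cases h : (i : ℕ) < n
      · rw [dif_pos h]
      · rw [dif_neg h]
        have hieq : i = ⟨n, Nat.lt_succ_self n⟩ := Fin.ext (show (i:ℕ) = n by omega)
        rw [hieq]
    have hxK : (fun j : Fin n => y ⟨j, Nat.lt_succ_of_lt j.isLt⟩) ∈ Kbox a n ε := by
      intro i
      have h := hy ⟨i, Nat.lt_succ_of_lt i.isLt⟩
      rwa [Function.update_of_ne (by exact Nat.ne_of_lt i.isLt)] at h
    have htb : |y ⟨n, Nat.lt_succ_self n⟩| ≤ δ/2 := by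
      have h := hy ⟨n, Nat.lt_succ_self n⟩
      rw [Function.update_self] at h
      rwa [hN n hn, sub_zero] at h
    have hmem : ((fun j : Fin n => y ⟨j, Nat.lt_succ_of_lt j.isLt⟩), y ⟨n, Nat.lt_succ_self n⟩)
        ∈ Metric.thickening δ ((Kbox a n ε) ×ˢ ({0} : Set ℝ)) := by
      rw [Metric.mem_thickening_iff]
      refine ⟨((fun j : Fin n => y ⟨j, Nat.lt_succ_of_lt j.isLt⟩), 0), ⟨hxK, rfl⟩, ?_⟩
      rw [Prod.dist_eq]
      simp only [dist_self, Real.dist_eq, sub_zero]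
      rw [max_eq_right (abs_nonneg _)]
      calc |y ⟨n, Nat.lt_succ_self n⟩| ≤ δ/2 := htb
        _ < δ := by linarith
    have := hth hmem
    rw [Set.mem_preimage] at this
    rw [Set.mem_preimage]
    rw [hyg]
    exact this
  -- build the chain
  set F := epsChain a U N ⟨hbase.choose, hbase.choose_spec⟩ hstep with hF
  refine ⟨fun k => (F (k+1)).1 k, fun k => (F (k+1)).2.1 k, ?_⟩
  have hagree2 : ∀ m m' k, k < N + m → k < N + m' → (F m).1 k = (F m').1 k := by
    intro m m' k h1 h2
    rcases le_total m m' with h | h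
    · obtain ⟨d, rfl⟩ := Nat.exists_eq_add_of_le h
      exact (epsChain_agree a U N d m k h1).symm
    · obtain ⟨d, rfl⟩ := Nat.exists_eq_add_of_le h
      exact epsChain_agree a U N d m' k h2
  intro x hx
  obtain ⟨M, hM⟩ := x.spec
  have hxK : (fun i : Fin (N+M) => x.seq i) ∈ Kbox a (N+M) ((F M).1) := by
    intro i
    have h1 : |x.seq i - a.seq i| < (F ((i:ℕ)+1)).1 i := hx i
    have h2 : (F ((i:ℕ)+1)).1 i = (F M).1 i :=
      hagree2 ((i:ℕ)+1) M i (by omega) i.isLt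
    rw [h2] at h1
    exact le_of_lt h1
  have hmem := (F M).2.2 hxK
  rw [Set.mem_preimage] at hmem
  have heq : uMap (N+M) (fun i : Fin (N+M) => x.seq i) = x := by
    apply Rinf.ext'
    intro k
    show (if h : k < N+M then x.seq k else 0) = x.seq k
    by_cases h : k < N+M
    · rw [dif_pos h]
    · rw [dif_neg h, hM k (by omega)]
  rwa [heq] at hmem

lemma rbox_mem_nhds {a : Rinf} {ε : ℕ → ℝ} (hε : ∀ k, 0 < ε k) : rbox a ε ∈ nhds a :=
  (rbox_isOpen a ε).mem_nhds (mem_rbox_self a hε)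

lemma mem_nhds_Rinf {s : Set Rinf} {a : Rinf} :
    s ∈ nhds a ↔ ∃ ε : ℕ → ℝ, (∀ k, 0 < ε k) ∧ rbox a ε ⊆ s := by
  constructor
  · intro hs
    obtain ⟨U, hUs, hUo, haU⟩ := mem_nhds_iff.mp hs
    obtain ⟨ε, hε, hsub⟩ := exists_rbox_subset hUo haU
    exact ⟨ε, hε, hsub.trans hUs⟩
  · rintro ⟨ε, hε, hsub⟩
    exact Filter.mem_of_superset (rbox_mem_nhds hε) hsub

lemma continuousAdd_Rinf : ContinuousAdd Rinf := by
  constructor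
  rw [continuous_iff_continuousAt]
  rintro ⟨a, b⟩
  intro s hs
  rw [Filter.mem_map]
  rw [nhds_prod_eq]
  obtain ⟨ε, hε, hsub⟩ := mem_nhds_Rinf.mp hs
  rw [Filter.mem_prod_iff]
  refine ⟨rbox a (fun k => ε k / 2), rbox_mem_nhds (fun k => by linarith [hε k]),
          rbox b (fun k => ε k / 2), rbox_mem_nhds (fun k => by linarith [hε k]), ?_⟩
  rintro ⟨x, y⟩ ⟨hx, hy⟩
  apply hsub
  intro k
  have h1 := hx k
  have h2 := hy k
  show |(x.seq k + y.seq k) - (a.seq k + b.seq k)| < ε k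
  calc |(x.seq k + y.seq k) - (a.seq k + b.seq k)|
      = |(x.seq k - a.seq k) + (y.seq k - b.seq k)| := by ring_nf
    _ ≤ |x.seq k - a.seq k| + |y.seq k - b.seq k| := abs_add_le _ _
    _ < ε k := by linarith

lemma continuousSMul_Rinf : ContinuousSMul ℝ Rinf := by
  constructor
  rw [continuous_iff_continuousAt]
  rintro ⟨c, a⟩
  intro s hs
  rw [Filter.mem_map, nhds_prod_eq]
  obtain ⟨ε, hε, hsub⟩ := mem_nhds_Rinf.mp hs
  obtain ⟨N, hNa⟩ := a.spec
  set D : Finset ℝ := insert 1 ((Finset.range N).image (fun k => ε k / (2 * (|a.seq k| + 1)))) with hD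
  set δ : ℝ := D.min' ⟨1, Finset.mem_insert_self _ _⟩ with hδdef
  have hδpos : 0 < δ := by
    have hmem : δ ∈ D := Finset.min'_mem D ⟨1, Finset.mem_insert_self _ _⟩
    rcases Finset.mem_insert.mp hmem with h | h
    · rw [h]; norm_num
    · obtain ⟨k, _, hke⟩ := Finset.mem_image.mp h
      rw [← hke]
      have := hε k
      positivity
  have hδ1 : δ ≤ 1 := Finset.min'_le _ _ (Finset.mem_insert_self _ _)
  have hδk : ∀ k < N, δ ≤ ε k / (2 * (|a.seq k| + 1)) := fun k hk =>
    Finset.min'_le _ _ (Finset.mem_insert_of_mem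
      (Finset.mem_image_of_mem _ (Finset.mem_range.mpr hk)))
  rw [Filter.mem_prod_iff]
  refine ⟨Metric.ball c δ, Metric.ball_mem_nhds c hδpos,
    rbox a (fun k => ε k / (2 * (|c| + 2))), rbox_mem_nhds (fun k => by
      have := hε k; positivity), ?_⟩
  rintro ⟨t, x⟩ ⟨ht, hx⟩
  apply hsub
  intro k
  have htd : |t - c| < δ := by rwa [Metric.mem_ball, Real.dist_eq] at ht
  have h1 : |x.seq k - a.seq k| < ε k / (2 * (|c| + 2)) := hx k
  show |t * x.seq k - c * a.seq k| < ε k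
  have htri : |t * x.seq k - c * a.seq k|
      ≤ |t| * |x.seq k - a.seq k| + |t - c| * |a.seq k| := by
    calc |t * x.seq k - c * a.seq k|
        = |t * (x.seq k - a.seq k) + (t - c) * a.seq k| := by ring_nf
      _ ≤ |t * (x.seq k - a.seq k)| + |(t - c) * a.seq k| := abs_add_le _ _
      _ = |t| * |x.seq k - a.seq k| + |t - c| * |a.seq k| := by rw [abs_mul, abs_mul]
  have hterm2 : |t - c| * |a.seq k| ≤ ε k / 2 := by
    by_cases hk : k < N
    · have hpos2 : (0:ℝ) < 2 * (|a.seq k| + 1) := by positivity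
      have h3 := (le_div_iff₀ hpos2).mp (hδk k hk)
      nlinarith [abs_nonneg (a.seq k), abs_nonneg (t - c)]
    · rw [hNa k (Nat.le_of_not_lt hk), abs_zero, mul_zero]
      have := hε k
      positivity
  have hterm1 : |t| * |x.seq k - a.seq k| < ε k / 2 := by
    have hc : |t| ≤ |c| + |t - c| := by
      calc |t| = |c + (t - c)| := by ring_nf
        _ ≤ |c| + |t - c| := abs_add_le _ _
    have h5 : |t| < |c| + 1 := lt_of_le_of_lt hc (by linarith)
    have h6 : |t| * |x.seq k - a.seq k| < (|c| + 1) * (ε k / (2 * (|c| + 2))) :=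
      mul_lt_mul'' h5 h1 (abs_nonneg _) (abs_nonneg _)
    have hη : (ε k / (2 * (|c| + 2))) * (2 * (|c| + 2)) = ε k :=
      div_mul_cancel₀ _ (by positivity)
    have hηpos : 0 < ε k / (2 * (|c| + 2)) := by have := hε k; positivity
    nlinarith
  linarith

lemma continuousMul_Rinf : Continuous (fun p : Rinf × Rinf => p.1 * p.2) := by
  rw [continuous_iff_continuousAt]
  rintro ⟨a, b⟩
  intro s hs
  rw [Filter.mem_map, nhds_prod_eq]
  obtain ⟨ε, hε, hsub⟩ := mem_nhds_Rinf.mp hs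
  set η : ℕ → ℝ := fun k => min 1 (ε k / (2 * (|a.seq k| + |b.seq k| + 1))) with hηdef
  have hηpos : ∀ k, 0 < η k := fun k =>
    lt_min one_pos (by have := hε k; positivity)
  have hη1 : ∀ k, η k ≤ 1 := fun k => min_le_left _ _
  have hηd : ∀ k, η k * (2 * (|a.seq k| + |b.seq k| + 1)) ≤ ε k := fun k => by
    have hpos : (0:ℝ) < 2 * (|a.seq k| + |b.seq k| + 1) := by positivity
    exact (le_div_iff₀ hpos).mp (min_le_right _ _)
  rw [Filter.mem_prod_iff]
  refine ⟨rbox a η, rbox_mem_nhds hηpos, rbox b η, rbox_mem_nhds hηpos, ?_⟩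
  rintro ⟨x, y⟩ ⟨hx, hy⟩
  apply hsub
  intro k
  have h1 : |x.seq k - a.seq k| < η k := hx k
  have h2 : |y.seq k - b.seq k| < η k := hy k
  show |x.seq k * y.seq k - a.seq k * b.seq k| < ε k
  have htri : |x.seq k * y.seq k - a.seq k * b.seq k|
      ≤ |x.seq k - a.seq k| * |y.seq k - b.seq k| + |a.seq k| * |y.seq k - b.seq k|
        + |x.seq k - a.seq k| * |b.seq k| := by
    calc |x.seq k * y.seq k - a.seq k * b.seq k|
        = |(x.seq k - a.seq k) * (y.seq k - b.seq k) + a.seq k * (y.seq k - b.seq k)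
            + (x.seq k - a.seq k) * b.seq k| := by ring_nf
      _ ≤ |(x.seq k - a.seq k) * (y.seq k - b.seq k) + a.seq k * (y.seq k - b.seq k)|
            + |(x.seq k - a.seq k) * b.seq k| := abs_add_le _ _
      _ ≤ |(x.seq k - a.seq k) * (y.seq k - b.seq k)| + |a.seq k * (y.seq k - b.seq k)|
            + |(x.seq k - a.seq k) * b.seq k| := by
            linarith [abs_add_le ((x.seq k - a.seq k) * (y.seq k - b.seq k))
              (a.seq k * (y.seq k - b.seq k))]
      _ = |x.seq k - a.seq k| * |y.seq k - b.seq k| + |a.seq k| * |y.seq k - b.seq k|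
            + |x.seq k - a.seq k| * |b.seq k| := by rw [abs_mul, abs_mul, abs_mul]
  have hT1 : |x.seq k - a.seq k| * |y.seq k - b.seq k| < η k * η k :=
    mul_lt_mul'' h1 h2 (abs_nonneg _) (abs_nonneg _)
  have hT2 : |a.seq k| * |y.seq k - b.seq k| ≤ |a.seq k| * η k :=
    mul_le_mul_of_nonneg_left (le_of_lt h2) (abs_nonneg _)
  have hT3 : |x.seq k - a.seq k| * |b.seq k| ≤ η k * |b.seq k| :=
    mul_le_mul_of_nonneg_right (le_of_lt h1) (abs_nonneg _)
  nlinarith [hηpos k, hη1 k, hηd k, hε k, abs_nonneg (a.seq k), abs_nonneg (b.seq k)]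

/-- Evaluation of the `j`-th coordinate as an additive homomorphism. -/
def seqAddHom (j : ℕ) : Rinf →+ ℝ where
  toFun x := x.seq j
  map_zero' := rfl
  map_add' _ _ := rfl

lemma mem_of_forall_e (W : Submodule ℝ Rinf) (he : ∀ m, eRinf m ∈ W) (x : Rinf) : x ∈ W := by
  classical
  obtain ⟨M, hM⟩ := x.spec
  have hx : x = ∑ k ∈ Finset.range M, x.seq k • eRinf k := by
    apply Rinf.ext'
    intro j
    symm
    have h1 : Rinf.seq (∑ k ∈ Finset.range M, x.seq k • eRinf k) j
        = ∑ k ∈ Finset.range M, (x.seq k • eRinf k).seq j :=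
      map_sum (seqAddHom j) _ _
    rw [h1]
    have h2 : ∀ k, (x.seq k • eRinf k).seq j = if j = k then x.seq k else 0 := by
      intro k
      show x.seq k * (if j = k then 1 else 0) = _
      split <;> simp
    rw [Finset.sum_congr rfl (fun k _ => h2 k), Finset.sum_ite_eq]
    by_cases h : j ∈ Finset.range M
    · rw [if_pos h]
    · rw [if_neg h]
      exact (hM j (by simpa using h)).symm
  rw [hx]
  exact Submodule.sum_mem W (fun k _ => W.smul_mem _ (he k))

lemma dense_subalg_eq_top (W : Submodule ℝ Rinf) (halg : IsSubalgebraRinf W)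
    (hd : Dense (W : Set Rinf)) : W = ⊤ := by
  classical
  rw [eq_top_iff]
  intro x _
  apply mem_of_forall_e
  intro m
  obtain ⟨w, hwW, hwb⟩ := hd.exists_mem_open (rbox_isOpen (eRinf m) (fun _ => 1/2))
    ⟨eRinf m, mem_rbox_self _ (fun _ => by norm_num)⟩
  have hwm : 1/2 < w.seq m := by
    have h := hwb m
    rw [show (eRinf m).seq m = 1 from if_pos rfl] at h
    have := (abs_lt.mp h).1
    linarith
  have hwk : ∀ k, k ≠ m → |w.seq k| < 1/2 := by
    intro k hk
    have h := hwb k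
    rwa [show (eRinf m).seq k = 0 from if_neg hk, sub_zero] at h
  obtain ⟨M, hM⟩ := w.spec
  have hmM : m < M := by
    by_contra h
    have := hM m (Nat.le_of_not_lt h)
    linarith
  have key : ∀ T : Finset ℝ, ∃ z, z ∈ W ∧
      ∀ k, z.seq k = w.seq k * ∏ s ∈ T, (w.seq k - s) := by
    intro T
    induction T using Finset.induction_on with
    | empty => exact ⟨w, hwW, fun k => by simp⟩
    | @insert s T hs ih =>
      obtain ⟨z, hzW, hz⟩ := ih
      refine ⟨z * w - s • z, Submodule.sub_mem W (halg z hzW w hwW) (W.smul_mem s hzW), ?_⟩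
      intro k
      show z.seq k * w.seq k - s * z.seq k = _
      rw [Finset.prod_insert hs, hz k]
      ring
  obtain ⟨z, hzW, hz⟩ := key ((Finset.image w.seq (Finset.range M)).erase (w.seq m))
  have hzm : z.seq m ≠ 0 := by
    rw [hz m]
    apply mul_ne_zero (by linarith)
    rw [Finset.prod_ne_zero_iff]
    intro s hsT
    exact sub_ne_zero.mpr (Ne.symm (Finset.mem_erase.mp hsT).1)
  have hz0 : ∀ k, k ≠ m → z.seq k = 0 := by
    intro k hk
    rw [hz k]
    by_cases hkM : k < M
    · apply mul_eq_zero_of_right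
      apply Finset.prod_eq_zero (i := w.seq k)
      · rw [Finset.mem_erase]
        refine ⟨ne_of_lt (by linarith [(abs_lt.mp (hwk k hk)).2]), 
          Finset.mem_image_of_mem _ (Finset.mem_range.mpr hkM)⟩
      · exact sub_self _
    · rw [hM k (Nat.le_of_not_lt hkM), zero_mul]
  have heq : eRinf m = (z.seq m)⁻¹ • z := by
    apply Rinf.ext'
    intro k
    show (if k = m then (1:ℝ) else 0) = (z.seq m)⁻¹ * z.seq k
    by_cases hk : k = m
    · rw [if_pos hk, hk, inv_mul_cancel₀ hzm]
    · rw [if_neg hk, hz0 k hk, mul_zero]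
  rw [heq]
  exact W.smul_mem _ hzW

/-- With the coordinatewise product, `ℝ^∞` is a commutative topological
algebra (multiplication is jointly continuous for the inductive limit topology), and `ℝ^∞` has
no proper dense subalgebra: every dense subalgebra equals `ℝ^∞`.  In particular `ℝ^∞` is
`ℵ₀`-dense-algebrable in itself but not `ℵ₀`-infinitely `ℵ₀`-dense-algebrable. -/
theorem stmt18 :
    (∀ x y : Rinf, x * y = y * x) ∧
    ContinuousAdd Rinf ∧ ContinuousSMul ℝ Rinf ∧
    Continuous (fun p : Rinf × Rinf => p.1 * p.2) ∧
    (∀ W : Submodule ℝ Rinf, IsSubalgebraRinf W → Dense (W : Set Rinf) → W = ⊤) ∧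
    (∃ W : Submodule ℝ Rinf, IsAleph0GenAlg W ∧ Dense (W : Set Rinf)) ∧
    ¬ ∃ (ι : Type) (Y : ι → Submodule ℝ Rinf), #ι = Cardinal.aleph0 ∧
        (∀ i, IsAleph0GenAlg (Y i) ∧ Dense ((Y i : Submodule ℝ Rinf) : Set Rinf)) ∧
        ∀ i j, i ≠ j → Y i ⊓ Y j = ⊥ := by
  classical
  refine ⟨fun x y => Rinf.ext' (fun k => mul_comm _ _),
    continuousAdd_Rinf, continuousSMul_Rinf, continuousMul_Rinf, dense_subalg_eq_top,
    ?_, ?_⟩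
  · -- existence of a dense ℵ₀-generated subalgebra
    refine ⟨⊤, ⟨⟨Set.range eRinf, ⟨fun _ _ _ _ => Submodule.mem_top, fun _ _ => Submodule.mem_top,
      fun W' _ hS x _ => mem_of_forall_e W' (fun m => hS (Set.mem_range_self m)) x⟩, ?_⟩, ?_⟩,
      by rw [Submodule.top_coe]; exact dense_univ⟩
    · have hinj : Function.Injective eRinf := by
        intro p q h
        by_contra hne
        have h3 : (eRinf p).seq p = (eRinf q).seq p := congrArg (fun z => Rinf.seq z p) h
        rw [show (eRinf p).seq p = 1 from if_pos rfl,
          show (eRinf q).seq p = 0 from if_neg hne] at h3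
        exact one_ne_zero h3
      rw [Cardinal.mk_range_eq eRinf hinj, Cardinal.mk_nat]
    · intro S hgen
      by_contra hlt
      have hfin : S.Finite := Cardinal.lt_aleph0_iff_set_finite.mp (lt_of_not_ge hlt)
      have hbnd : ∀ (x : Rinf) (k : ℕ), x.spec.choose ≤ k → x.seq k = 0 :=
        fun x => x.spec.choose_spec
      set N := hfin.toFinset.sup (fun x => x.spec.choose) with hNdef
      set W' : Submodule ℝ Rinf :=
        { carrier := {x : Rinf | ∀ k, N ≤ k → x.seq k = 0},
          add_mem' := by
            intro x y hx hy k hk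
            show x.seq k + y.seq k = 0
            rw [hx k hk, hy k hk, add_zero]
          zero_mem' := fun k _ => rfl
          smul_mem' := by
            intro c x hx k hk
            show c * x.seq k = 0
            rw [hx k hk, mul_zero] } with hW'
      have hsubalg : IsSubalgebraRinf W' := by
        intro x hx y hy k hk
        show x.seq k * y.seq k = 0
        rw [hx k hk, zero_mul]
      have hSW' : S ⊆ (W' : Set Rinf) := by
        intro x hxS k hk
        exact hbnd x k (le_trans (Finset.le_sup (f := fun x : Rinf => x.spec.choose) (hfin.mem_toFinset.mpr hxS)) hk)
      have hle : (⊤ : Submodule ℝ Rinf) ≤ W' := hgen.2.2 W' hsubalg hSW'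
      have heN : eRinf N ∈ W' := hle Submodule.mem_top
      have h1 : (eRinf N).seq N = 0 := heN N le_rfl
      rw [show (eRinf N).seq N = 1 from if_pos rfl] at h1
      exact one_ne_zero h1
  · rintro ⟨ι, Y, hι, hY, hdisj⟩
    haveI : Infinite ι := Cardinal.infinite_iff.mpr (le_of_eq hι.symm)
    obtain ⟨i, j, hij⟩ := exists_pair_ne ι
    have hYi : Y i = ⊤ := dense_subalg_eq_top _ (hY i).1.1.choose_spec.1.1 (hY i).2
    have hYj : Y j = ⊤ := dense_subalg_eq_top _ (hY j).1.1.choose_spec.1.1 (hY j).2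
    have hbot := hdisj i j hij
    rw [hYi, hYj, inf_idem] at hbot
    have h1 : eRinf 0 ∈ (⊥ : Submodule ℝ Rinf) := hbot ▸ Submodule.mem_top
    rw [Submodule.mem_bot] at h1
    have h2 : (eRinf 0).seq 0 = 1 := by
      show (if 0 = 0 then (1:ℝ) else 0) = 1
      rw [if_pos rfl]
    rw [h1] at h2
    exact zero_ne_one (show (0:ℝ) = 1 from h2)
end
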